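/- arXiv:0810.0352 — 4 statements merged into one kernel-verified Lean document; each statement's English description precedes it below -/
import Mathlib

section
/- Let K be a field, n ≥ 3, and let S_n be the monoid presented by generators a_1, …, a_n and relations a_1 a_2 ⋯ a_n = a_{σ(1)} ⋯ a_{σ(n)} for σ in the cyclic group generated by the n-cycle. If Q is a prime ideal of the monoid S_n, then the K-linear span K[Q] is a prime two-sided ideal of the monoid algebra K[S_n]. -/
/-- The word `a_{σ(1)} a_{σ(2)} ⋯ a_{σ(n)}` in the free monoid on `n` generators. -/
def permWord (n : ℕ) (σ : Equiv.Perm (Fin n)) : FreeMonoid (Fin n) :=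
  ((List.finRange n).map fun i => FreeMonoid.of (σ i)).prod

/-- The defining relations `a_1 a_2 ⋯ a_n = a_{σ(1)} a_{σ(2)} ⋯ a_{σ(n)}`, where `σ` runs
through the cyclic subgroup of `Sym_n` generated by the `n`-cycle `(1,2,…,n)` (i.e. `finRotate n`). -/
def cycRel (n : ℕ) : FreeMonoid (Fin n) → FreeMonoid (Fin n) → Prop :=
  fun x y => x = permWord n 1 ∧ ∃ k : ℕ, y = permWord n (finRotate n ^ k)

/-- The monoid `S_n` presented by generators `a_1, …, a_n` and the above relations. -/
def Scyc (n : ℕ) : Type := (conGen (cycRel n)).Quotient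

instance (n : ℕ) : Monoid (Scyc n) := Con.monoid _

/-- The generator `a_i` of `S_n`. -/
def agen {n : ℕ} (i : Fin n) : Scyc n := (conGen (cycRel n)).mk' (FreeMonoid.of i)

/-- The element `z = a_1 a_2 ⋯ a_n` of `S_n`. -/
def zc (n : ℕ) : Scyc n := ((List.finRange n).map agen).prod

namespace S15

open Fin.NatCast Fin.CommRing

/-! ### Words, runs -/

variable {n : ℕ} [NeZero n]

/-- The ascending run of length `ℓ` starting at `c`. -/
def runW : Fin n → ℕ → List (Fin n)
  | _, 0 => []
  | c, ℓ+1 => c :: runW (c+1) ℓ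

/-- The rotation word starting at `c`. -/
def rotW (c : Fin n) : List (Fin n) := runW c n

@[simp] lemma runW_zero (c : Fin n) : runW c 0 = [] := rfl

lemma runW_succ_left (c : Fin n) (ℓ : ℕ) : runW c (ℓ+1) = c :: runW (c+1) ℓ := rfl

@[simp] lemma runW_length (c : Fin n) (ℓ : ℕ) : (runW c ℓ).length = ℓ := by
  induction ℓ generalizing c with
  | zero => rfl
  | succ ℓ ih => simp [runW_succ_left, ih]

@[simp] lemma runW_one (c : Fin n) : runW c 1 = [c] := rfl

lemma runW_add (c : Fin n) (a b : ℕ) :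
    runW c (a+b) = runW c a ++ runW (c + (a : Fin n)) b := by
  induction a generalizing c with
  | zero => simp
  | succ a ih =>
    have : a + 1 + b = (a + b) + 1 := by omega
    rw [this, runW_succ_left, runW_succ_left, ih (c+1), List.cons_append]
    congr 3
    push_cast
    ring

lemma runW_succ_right (c : Fin n) (ℓ : ℕ) : runW c (ℓ+1) = runW c ℓ ++ [c + (ℓ : Fin n)] := by
  rw [runW_add c ℓ 1, runW_one]

lemma rotW_cons (c : Fin n) : (c : Fin n) :: rotW (c+1) = rotW c ++ [c] := by
  have h2 : runW c (n+1) = runW c n ++ [c + (n : Fin n)] := runW_succ_right c n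
  have h3 : ((n : ℕ) : Fin n) = 0 := by simp
  rw [h3, add_zero] at h2
  rw [rotW, rotW, ← runW_succ_left, h2]

lemma runW_getElem (c : Fin n) (ℓ : ℕ) (i : ℕ) (h : i < ℓ) (h' : i < (runW c ℓ).length) :
    (runW c ℓ)[i] = c + (i : Fin n) := by
  induction ℓ generalizing c i with
  | zero => omega
  | succ ℓ ih =>
    simp only [runW_succ_left]
    match i with
    | 0 => simp
    | (j+1) =>
      simp only [List.getElem_cons_succ]
      rw [ih (c+1) j (by omega) (by simp; omega)]
      push_cast
      ring

/-- Rotation-free words. -/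
def RotFree (u : List (Fin n)) : Prop := ∀ c p q, u ≠ p ++ rotW c ++ q

/-! ### The congruence -/

lemma finRotate_pow_apply {m : ℕ} (k : ℕ) (i : Fin (m+1)) :
    (finRotate (m+1) ^ k) i = i + (k : Fin (m+1)) := by
  induction k generalizing i with
  | zero => simp
  | succ k ih =>
    rw [pow_succ]
    show (finRotate (m+1) ^ k) (finRotate (m+1) i) = _
    rw [finRotate_succ_apply, ih]
    push_cast
    ring

lemma map_of_prod (l : List (Fin n)) :
    (l.map (FreeMonoid.of (α := Fin n))).prod = FreeMonoid.ofList l := by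
  induction l with
  | nil => rfl
  | cons a t ih =>
    rw [List.map_cons, List.prod_cons, ih]
    rfl

lemma permWord_eq (σ : Equiv.Perm (Fin n)) :
    permWord n σ = FreeMonoid.ofList ((List.finRange n).map σ) := by
  rw [permWord, ← map_of_prod, List.map_map]
  rfl

lemma finRange_eq_runW : List.finRange n = runW (0 : Fin n) n := by
  apply List.ext_getElem
  · simp
  · intro i h1 h2
    rw [List.getElem_finRange, runW_getElem _ _ _ (by simpa using h2), zero_add]
    ext
    simp [Nat.mod_eq_of_lt (by simpa using h2), Fin.val_cast_of_lt]

lemma permWord_one : permWord n 1 = FreeMonoid.ofList (rotW (0 : Fin n)) := by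
  rw [permWord_eq]
  simp only [Equiv.Perm.coe_one, List.map_id]
  rw [finRange_eq_runW]
  rfl

lemma permWord_pow (k : ℕ) :
    permWord n (finRotate n ^ k) = FreeMonoid.ofList (rotW ((k : ℕ) : Fin n)) := by
  obtain ⟨m, rfl⟩ : ∃ m, n = m + 1 := ⟨n - 1, (Nat.succ_pred_eq_of_pos (NeZero.pos n)).symm⟩
  rw [permWord_eq]
  congr 1
  apply List.ext_getElem
  · simp [rotW]
  · intro i h1 h2
    have hi : i < m + 1 := by simpa using h1
    simp only [List.getElem_map, List.getElem_finRange]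
    rw [finRotate_pow_apply]
    simp only [rotW]
    rw [runW_getElem _ _ _ (by simpa [rotW] using h2)]
    simp [Fin.ext_iff, Fin.val_add, Nat.mod_eq_of_lt hi, Nat.add_comm i k]

abbrev cg (n : ℕ) : Con (FreeMonoid (Fin n)) := conGen (cycRel n)

lemma cg_rot (c c' : Fin n) : cg n (FreeMonoid.ofList (rotW c)) (FreeMonoid.ofList (rotW c')) := by
  have base : ∀ c : Fin n, cg n (FreeMonoid.ofList (rotW (0 : Fin n))) (FreeMonoid.ofList (rotW c)) := by
    intro c
    apply ConGen.Rel.of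
    exact ⟨permWord_one.symm, ⟨c.val, by rw [permWord_pow, Fin.cast_val_eq_self]⟩⟩
  exact (cg n).trans ((cg n).symm (base c)) (base c')

lemma cg_factor (p q : List (Fin n)) (c c' : Fin n) :
    cg n (FreeMonoid.ofList (p ++ rotW c ++ q)) (FreeMonoid.ofList (p ++ rotW c' ++ q)) := by
  rw [FreeMonoid.ofList_append, FreeMonoid.ofList_append, FreeMonoid.ofList_append,
    FreeMonoid.ofList_append]
  exact (cg n).mul ((cg n).mul ((cg n).refl _) (cg_rot c c')) ((cg n).refl _)

lemma cg_comm_letter (i : Fin n) :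
    cg n (FreeMonoid.ofList (i :: rotW (0 : Fin n))) (FreeMonoid.ofList (rotW (0:Fin n) ++ [i])) := by
  have s1 : cg n (FreeMonoid.ofList (i :: rotW (0 : Fin n)))
      (FreeMonoid.ofList (i :: rotW (i+1))) := by
    have h := cg_factor (n := n) [i] [] 0 (i+1)
    simpa using h
  have s2 : (i :: rotW (i+1) : List (Fin n)) = rotW i ++ [i] := rotW_cons i
  have s3 : cg n (FreeMonoid.ofList (rotW i ++ [i])) (FreeMonoid.ofList (rotW (0:Fin n) ++ [i])) := by
    have h := cg_factor (n := n) [] [i] i 0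
    simpa using h
  exact (cg n).trans (s2 ▸ s1) s3

lemma cg_move_front (p q : List (Fin n)) :
    cg n (FreeMonoid.ofList (p ++ rotW (0:Fin n) ++ q)) (FreeMonoid.ofList (rotW (0:Fin n) ++ (p ++ q))) := by
  induction p with
  | nil =>
    simp only [List.nil_append]
    exact (cg n).refl _
  | cons a t ih =>
    have h1 : cg n (FreeMonoid.ofList ((a :: t) ++ rotW (0:Fin n) ++ q))
        (FreeMonoid.ofList ([a] ++ (rotW (0:Fin n) ++ (t ++ q)))) := by
      have e : ((a :: t) ++ rotW (0:Fin n) ++ q) = [a] ++ (t ++ rotW (0:Fin n) ++ q) := by simp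
      rw [e, FreeMonoid.ofList_append, FreeMonoid.ofList_append]
      exact (cg n).mul ((cg n).refl _) ih
    have h2 : cg n (FreeMonoid.ofList ([a] ++ (rotW (0:Fin n) ++ (t ++ q))))
        (FreeMonoid.ofList ((rotW (0:Fin n) ++ [a]) ++ (t ++ q))) := by
      rw [show ([a] ++ (rotW (0:Fin n) ++ (t ++ q))) = (a :: rotW (0:Fin n)) ++ (t ++ q) by simp,
        FreeMonoid.ofList_append, FreeMonoid.ofList_append]
      exact (cg n).mul (cg_comm_letter a) ((cg n).refl _)
    refine (cg n).trans h1 ((cg n).trans h2 ?_)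
    rw [show ((rotW (0:Fin n) ++ [a]) ++ (t ++ q)) = (rotW (0:Fin n) ++ (a :: t ++ q)) by simp]
    exact (cg n).refl _

/-- The quotient map as a monoid hom into `Scyc n`. -/
def sq : FreeMonoid (Fin n) →* Scyc n := (cg n).mk'

lemma sq_eq_iff (x y : FreeMonoid (Fin n)) : sq (n := n) x = sq y ↔ cg n x y := by
  show ((cg n).mk' x : (cg n).Quotient) = (cg n).mk' y ↔ _
  exact Con.eq (c := cg n)

lemma sq_mul (x y : FreeMonoid (Fin n)) : sq (n := n) (x * y) = sq x * sq y := map_mul _ _ _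

/-- `z` as the class of the basic rotation word. -/
def zq : Scyc n := sq (FreeMonoid.ofList (rotW (0 : Fin n)))

lemma exists_nf (u : List (Fin n)) : ∃ m v, RotFree (n := n) v ∧
    sq (FreeMonoid.ofList u) = (zq (n := n))^m * sq (FreeMonoid.ofList v) := by
  generalize hL : u.length = L
  induction L using Nat.strong_induction_on generalizing u with
  | _ L IH =>
    by_cases hrf : RotFree (n := n) u
    · exact ⟨0, u, hrf, by rw [pow_zero, one_mul]⟩
    · unfold RotFree at hrf
      push_neg at hrf
      obtain ⟨c, p, q, rfl⟩ := hrf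
      have e1 : sq (n := n) (FreeMonoid.ofList (p ++ rotW c ++ q)) =
          sq (FreeMonoid.ofList (rotW (0:Fin n) ++ (p ++ q))) := by
        rw [sq_eq_iff]
        exact (cg n).trans (cg_factor p q c 0) (cg_move_front p q)
      have e2 : sq (n := n) (FreeMonoid.ofList (rotW (0:Fin n) ++ (p ++ q))) =
          zq * sq (FreeMonoid.ofList (p ++ q)) := by
        rw [FreeMonoid.ofList_append, sq_mul]; rfl
      have hlen : (p ++ q).length < L := by
        have : (p ++ rotW c ++ q).length = p.length + n + q.length := by
          simp [rotW]; omega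
        simp only [List.length_append] at *
        have hn1 := NeZero.pos n
        omega
      obtain ⟨m, v, hv, he⟩ := IH _ hlen (p ++ q) rfl
      exact ⟨m + 1, v, hv, by rw [e1, e2, he, ← mul_assoc, ← pow_succ']⟩

/-! ### Run decomposition -/

def consRun (a : Fin n) : List (Fin n × ℕ) → List (Fin n × ℕ)
  | [] => [(a,1)]
  | p :: r => if p.1 = a + 1 then (a, p.2+1) :: r else (a,1) :: p :: r

def splitRuns : List (Fin n) → List (Fin n × ℕ)
  | [] => []
  | a :: t => consRun a (splitRuns t)

def joinRuns (rs : List (Fin n × ℕ)) : List (Fin n) := (rs.map fun p => runW p.1 p.2).flatten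

lemma joinRuns_consRun (a : Fin n) (rs : List (Fin n × ℕ)) :
    joinRuns (consRun a rs) = a :: joinRuns rs := by
  cases rs with
  | nil => simp [consRun, joinRuns]
  | cons p r =>
    by_cases h : p.1 = a + 1
    · simp only [consRun, if_pos h, joinRuns, List.map_cons, List.flatten_cons]
      rw [runW_succ_left, h]
      simp
    · simp [consRun, if_neg h, joinRuns]

lemma joinRuns_splitRuns (u : List (Fin n)) : joinRuns (splitRuns u) = u := by
  induction u with
  | nil => rfl
  | cons a t ih => rw [splitRuns, joinRuns_consRun, ih]

lemma splitRuns_pos (u : List (Fin n)) : ∀ p ∈ splitRuns u, 1 ≤ p.2 := by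
  induction u with
  | nil => simp [splitRuns]
  | cons a t ih =>
    rw [splitRuns]
    cases hrs : splitRuns t with
    | nil => simp [consRun]
    | cons p r =>
      rw [hrs] at ih
      by_cases h : p.1 = a + 1
      · simp only [consRun, if_pos h]
        intro x hx
        rcases List.mem_cons.mp hx with rfl | hx
        · omega
        · exact ih x (List.mem_cons_of_mem _ hx)
      · simp only [consRun, if_neg h]
        intro x hx
        rcases List.mem_cons.mp hx with rfl | hx
        · omega
        · exact ih x hx

def runChain : (Fin n × ℕ) → (Fin n × ℕ) → Prop := fun p q => q.1 ≠ p.1 + (p.2 : Fin n)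

lemma splitRuns_chain (u : List (Fin n)) : List.IsChain (runChain (n := n)) (splitRuns u) := by
  induction u with
  | nil => simp [splitRuns]
  | cons a t ih =>
    rw [splitRuns]
    cases hrs : splitRuns t with
    | nil => simp [consRun]
    | cons p r =>
      rw [hrs] at ih
      by_cases h : p.1 = a + 1
      · simp only [consRun, if_pos h]
        rw [List.isChain_cons] at ih ⊢
        refine ⟨?_, ih.2⟩
        intro y hy
        have := ih.1 y hy
        unfold runChain at this ⊢
        rw [h] at this
        intro hc
        apply this
        rw [hc]
        push_cast
        ring
      · simp only [consRun, if_neg h]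
        rw [List.isChain_cons_cons]
        exact ⟨by simpa [runChain] using h, ih⟩

lemma flatten_factor {α : Type*} (L : List (List α)) (l : List α) (hl : l ∈ L) :
    ∃ p q, L.flatten = p ++ l ++ q := by
  induction L with
  | nil => simp at hl
  | cons x t ih =>
    rcases List.mem_cons.mp hl with rfl | hl
    · exact ⟨[], t.flatten, by simp⟩
    · obtain ⟨p, q, hpq⟩ := ih hl
      exact ⟨x ++ p, q, by simp [hpq]⟩

lemma splitRuns_factor (u : List (Fin n)) (p : Fin n × ℕ) (hp : p ∈ splitRuns u) :
    ∃ A B, u = A ++ runW p.1 p.2 ++ B := by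
  obtain ⟨A, B, hAB⟩ := flatten_factor _ _ (List.mem_map_of_mem (f := fun p => runW p.1 p.2) hp)
  exact ⟨A, B, by rw [← joinRuns_splitRuns u, joinRuns, hAB]⟩

lemma splitRuns_lt (u : List (Fin n)) (hu : RotFree u) : ∀ p ∈ splitRuns u, p.2 < n := by
  intro p hp
  by_contra hge
  push_neg at hge
  obtain ⟨A, B, hAB⟩ := splitRuns_factor u p hp
  have : runW p.1 p.2 = rotW p.1 ++ runW (p.1 + (n : Fin n)) (p.2 - n) := by
    rw [rotW, ← runW_add]
    congr 1
    omega
  rw [this] at hAB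
  exact hu p.1 A (runW (p.1 + (n : Fin n)) (p.2 - n) ++ B) (by simp [hAB])

/-! ### The free group invariant -/

def yhat (i : Fin n) : FreeGroup (Fin (n-1)) :=
  if h : (i : ℕ) < n - 1 then FreeGroup.of ⟨i.val, h⟩ else 1

def phi1 : FreeMonoid (Fin n) →* FreeGroup (Fin (n-1)) :=
  FreeMonoid.lift fun i => yhat i * (yhat (i+1))⁻¹

lemma phi1_runW (c : Fin n) (ℓ : ℕ) :
    phi1 (FreeMonoid.ofList (runW c ℓ)) = yhat c * (yhat (c + (ℓ : Fin n)))⁻¹ := by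
  induction ℓ generalizing c with
  | zero =>
    show phi1 1 = _
    rw [map_one]
    simp
  | succ ℓ ih =>
    rw [runW_succ_left]
    have e : FreeMonoid.ofList (c :: runW (c+1) ℓ) =
        FreeMonoid.of c * FreeMonoid.ofList (runW (c+1) ℓ) := rfl
    rw [e, map_mul, ih]
    have e2 : phi1 (FreeMonoid.of c) = yhat c * (yhat (c+1))⁻¹ := by
      simp [phi1]
    rw [e2]
    have e3 : c + 1 + (ℓ : Fin n) = c + ((ℓ+1 : ℕ) : Fin n) := by push_cast; ring
    rw [← e3]
    group

lemma phi1_rotW (c : Fin n) : phi1 (FreeMonoid.ofList (rotW c)) = 1 := by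
  rw [rotW, phi1_runW]
  simp

/-! ### Tokens -/

def optL (i : Fin n) (b : Bool) : List (Fin (n-1) × Bool) :=
  if h : (i : ℕ) < n - 1 then [(⟨i.val, h⟩, b)] else []

def tok (p : Fin n × ℕ) : List (Fin (n-1) × Bool) :=
  optL p.1 true ++ optL (p.1 + (p.2 : Fin n)) false

def Lw (u : List (Fin n)) : List (Fin (n-1) × Bool) := ((splitRuns u).map tok).flatten

lemma mk_optL_true (i : Fin n) : FreeGroup.mk (optL i true) = yhat i := by
  unfold optL yhat
  by_cases h : (i : ℕ) < n - 1
  · rw [dif_pos h, dif_pos h]; rfl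
  · rw [dif_neg h, dif_neg h]; exact FreeGroup.one_eq_mk.symm

lemma mk_optL_false (i : Fin n) : FreeGroup.mk (optL i false) = (yhat i)⁻¹ := by
  unfold optL yhat
  by_cases h : (i : ℕ) < n - 1
  · rw [dif_pos h, dif_pos h]
    have : (optL i false) = FreeGroup.invRev [(⟨i.val, h⟩, true)] := by
      simp [FreeGroup.invRev, optL, dif_pos h]
    rw [show ([((⟨i.val, h⟩ : Fin (n-1)), false)]) = FreeGroup.invRev [(⟨i.val, h⟩, true)] by
      simp [FreeGroup.invRev]]
    rw [← FreeGroup.inv_mk]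
    rfl
  · rw [dif_neg h, dif_neg h]
    rw [inv_one]
    exact FreeGroup.one_eq_mk.symm

lemma mk_tok (p : Fin n × ℕ) :
    FreeGroup.mk (tok p) = yhat p.1 * (yhat (p.1 + (p.2 : Fin n)))⁻¹ := by
  rw [tok, ← FreeGroup.mul_mk, mk_optL_true, mk_optL_false]

lemma phi1_joinRuns (rs : List (Fin n × ℕ)) :
    phi1 (FreeMonoid.ofList (joinRuns rs)) = FreeGroup.mk ((rs.map tok).flatten) := by
  induction rs with
  | nil =>
    show phi1 1 = _
    rw [map_one]
    exact FreeGroup.one_eq_mk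
  | cons p r ih =>
    have e : joinRuns (p :: r) = runW p.1 p.2 ++ joinRuns r := rfl
    rw [e, FreeMonoid.ofList_append, map_mul, ih, phi1_runW]
    rw [List.map_cons, List.flatten_cons, ← FreeGroup.mul_mk, mk_tok]

lemma phi1_eq_mk_Lw (u : List (Fin n)) :
    phi1 (FreeMonoid.ofList u) = FreeGroup.mk (Lw u) := by
  conv_lhs => rw [← joinRuns_splitRuns u]
  exact phi1_joinRuns _

/-! ### Reducedness -/

def NC {β : Type*} : (β × Bool) → (β × Bool) → Prop := fun a b => ¬(a.1 = b.1 ∧ a.2 = !b.2)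

lemma reduce_eq_self {β : Type*} [DecidableEq β] (w : List (β × Bool))
    (h : List.IsChain NC w) : FreeGroup.reduce w = w := by
  induction w with
  | nil => rfl
  | cons x t ih =>
    rw [FreeGroup.reduce.cons, ih h.tail]
    cases t with
    | nil => rfl
    | cons hd tl =>
      have hnc : NC x hd := List.isChain_cons_cons.mp h |>.1
      simp only [NC] at hnc
      simp only [List.casesOn]
      rw [if_neg hnc]

lemma val_last_of_not_lt {i : Fin n} (h : ¬ (i : ℕ) < n - 1) : (i : ℕ) = n - 1 := by
  have := i.isLt; omega

lemma fin_add_ne (s : Fin n) {ℓ : ℕ} (h1 : 1 ≤ ℓ) (h2 : ℓ < n) : s + (ℓ : Fin n) ≠ s := by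
  intro hc
  have : ((ℓ : Fin n)) = 0 := by
    have h' : s + (ℓ : Fin n) = s + 0 := by rw [add_zero]; exact hc
    exact add_left_cancel h'
  have hv : (ℓ : Fin n).val = 0 := by rw [this]; rfl
  rw [Fin.val_natCast, Nat.mod_eq_of_lt h2] at hv
  omega

lemma tok_ne_nil {p : Fin n × ℕ} (h1 : 1 ≤ p.2) (h2 : p.2 < n) : tok p ≠ [] := by
  unfold tok optL
  by_cases ha : (p.1 : ℕ) < n - 1
  · rw [dif_pos ha]; simp
  · by_cases hb : ((p.1 + (p.2 : Fin n) : Fin n) : ℕ) < n - 1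
    · rw [dif_neg ha, dif_pos hb]; simp
    · exfalso
      have e1 := val_last_of_not_lt ha
      have e2 := val_last_of_not_lt hb
      have : p.1 + (p.2 : Fin n) = p.1 := Fin.ext (by rw [e1, e2])
      exact fin_add_ne p.1 h1 h2 this

lemma tok_chain {p : Fin n × ℕ} (h1 : 1 ≤ p.2) (h2 : p.2 < n) : List.IsChain NC (tok p) := by
  unfold tok optL
  by_cases ha : (p.1 : ℕ) < n - 1
  · by_cases hb : ((p.1 + (p.2 : Fin n) : Fin n) : ℕ) < n - 1
    · rw [dif_pos ha, dif_pos hb]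
      refine List.isChain_cons_cons.mpr ⟨?_, List.isChain_singleton _⟩
      intro ⟨hfst, _⟩
      have : p.1 = p.1 + (p.2 : Fin n) := Fin.ext (by
        have := congrArg Fin.val hfst
        simpa using this)
      exact fin_add_ne p.1 h1 h2 this.symm
    · rw [dif_pos ha, dif_neg hb]; simp
  · rw [dif_neg ha]
    by_cases hb : ((p.1 + (p.2 : Fin n) : Fin n) : ℕ) < n - 1
    · rw [dif_pos hb]; simp
    · rw [dif_neg hb]; simp

lemma tok_junction {p q : Fin n × ℕ} (hp1 : 1 ≤ p.2) (hp2 : p.2 < n)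
    (hq1 : 1 ≤ q.2) (hq2 : q.2 < n) (hrc : runChain p q) :
    ∀ x ∈ (tok p).getLast?, ∀ y ∈ (tok q).head?, NC x y := by
  intro x hx y hy
  unfold tok optL at hx hy
  by_cases hb : ((p.1 + (p.2 : Fin n) : Fin n) : ℕ) < n - 1
  · -- last of tok p is (e_p, false)
    rw [dif_pos hb] at hx
    have hx' : x = (⟨_, hb⟩, false) := by
      rcases (dite ((p.1:ℕ) < n-1) (fun h => Or.inl h) (fun h => Or.inr h)) with ha | ha
      · rw [dif_pos ha] at hx; exact (show _ = x by simpa using hx).symm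
      · rw [dif_neg ha] at hx; exact (show _ = x by simpa using hx).symm
    subst hx'
    by_cases hc : ((q.1 : ℕ)) < n - 1
    · rw [dif_pos hc] at hy
      have hy' : y = (⟨_, hc⟩, true) := (by simpa using hy : _ = y).symm
      subst hy'
      intro ⟨hfst, _⟩
      apply hrc
      exact (Fin.ext (by simpa using congrArg Fin.val hfst)).symm
    · rw [dif_neg hc] at hy
      by_cases hd : ((q.1 + (q.2 : Fin n) : Fin n) : ℕ) < n - 1
      · rw [dif_pos hd] at hy
        have hy' : y = (⟨_, hd⟩, false) := (by simpa using hy : _ = y).symm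
        subst hy'
        intro ⟨_, hbool⟩
        simp at hbool
      · rw [dif_neg hd] at hy
        simp at hy
  · -- second of tok p absent; last is (s_p, true) (if present)
    rw [dif_neg hb] at hx
    by_cases ha : (p.1 : ℕ) < n - 1
    · rw [dif_pos ha] at hx
      have hx' : x = (⟨_, ha⟩, true) := (by simpa using hx : _ = x).symm
      subst hx'
      by_cases hc : ((q.1 : ℕ)) < n - 1
      · rw [dif_pos hc] at hy
        have hy' : y = (⟨_, hc⟩, true) := (by simpa using hy : _ = y).symm
        subst hy'
        intro ⟨_, hbool⟩
        simp at hbool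
      · -- q first absent and p second absent: impossible
        exfalso
        apply hrc
        exact Fin.ext (by rw [val_last_of_not_lt hc, val_last_of_not_lt hb])
    · rw [dif_neg ha] at hx
      simp at hx

lemma chain_NC_flatten (rs : List (Fin n × ℕ)) (hlen : ∀ p ∈ rs, 1 ≤ p.2 ∧ p.2 < n)
    (hch : List.IsChain runChain rs) : List.IsChain NC ((rs.map tok).flatten) := by
  induction rs with
  | nil => simp
  | cons p r ih =>
    rw [List.map_cons, List.flatten_cons]
    rw [List.isChain_append]
    obtain ⟨hp1, hp2⟩ := hlen p (List.mem_cons_self)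
    refine ⟨tok_chain hp1 hp2, ih (fun q hq => hlen q (List.mem_cons_of_mem _ hq)) hch.tail, ?_⟩
    intro x hx y hy
    cases r with
    | nil => simp at hy
    | cons q r' =>
      obtain ⟨hq1, hq2⟩ := hlen q (List.mem_cons_of_mem _ (List.mem_cons_self))
      have hrc : runChain p q := (List.isChain_cons_cons.mp hch).1
      apply tok_junction hp1 hp2 hq1 hq2 hrc x hx y
      rw [List.map_cons, List.flatten_cons] at hy
      rw [List.head?_append] at hy
      cases hh : (tok q).head? with
      | none =>
        exfalso
        exact tok_ne_nil hq1 hq2 (List.head?_eq_none_iff.mp hh)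
      | some z =>
        rw [hh] at hy
        simp only [Option.some_or] at hy
        first
        | exact hy
        | (rw [hh]; exact hy)

lemma cast_nat_inj {a b : ℕ} (ha : a < n) (hb : b < n) (h : (a : Fin n) = (b : Fin n)) : a = b := by
  have := congrArg Fin.val h
  rwa [Fin.val_natCast, Fin.val_natCast, Nat.mod_eq_of_lt ha, Nat.mod_eq_of_lt hb] at this

lemma run_eq_of_ends {p p' : Fin n × ℕ} (h1 : p.1 = p'.1)
    (e : p.1 + (p.2 : Fin n) = p'.1 + (p'.2 : Fin n))
    (hp2 : p.2 < n) (hp2' : p'.2 < n) : p = p' := by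
  rw [h1] at e
  have := add_left_cancel e
  exact Prod.ext h1 (cast_nat_inj hp2 hp2' this)

lemma tok_flatten_inj : ∀ (rs rs' : List (Fin n × ℕ)),
    (∀ p ∈ rs, 1 ≤ p.2 ∧ p.2 < n) → List.IsChain runChain rs →
    (∀ p ∈ rs', 1 ≤ p.2 ∧ p.2 < n) → List.IsChain runChain rs' →
    (rs.map tok).flatten = (rs'.map tok).flatten → rs = rs' := by
  intro rs
  induction rs with
  | nil =>
    intro rs' _ _ hg' _ heq
    cases rs' with
    | nil => rfl
    | cons q r' =>
      exfalso
      simp only [List.map_nil, List.flatten_nil, List.map_cons, List.flatten_cons] at heq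
      obtain ⟨hq1, hq2⟩ := hg' q (List.mem_cons_self)
      rcases List.append_eq_nil_iff.mp heq.symm with ⟨h1, _⟩
      exact tok_ne_nil hq1 hq2 h1
  | cons p r ih =>
    intro rs' hg hch hg' hch' heq
    cases rs' with
    | nil =>
      exfalso
      simp only [List.map_nil, List.flatten_nil, List.map_cons, List.flatten_cons] at heq
      obtain ⟨hp1, hp2⟩ := hg p (List.mem_cons_self)
      rcases List.append_eq_nil_iff.mp heq with ⟨h1, _⟩
      exact tok_ne_nil hp1 hp2 h1
    | cons p' r' =>
      obtain ⟨hp1, hp2⟩ := hg p (List.mem_cons_self)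
      obtain ⟨hp1', hp2'⟩ := hg' p' (List.mem_cons_self)
      simp only [List.map_cons, List.flatten_cons] at heq
      -- names for the two flattened tails
      set F : List (Fin (n-1) × Bool) := (List.map tok r).flatten with hF
      set F' : List (Fin (n-1) × Bool) := (List.map tok r').flatten with hF'
      have htails : p = p' ∧ F = F' := by
        unfold tok optL at heq
        by_cases ha : ((p.1 : ℕ)) < n - 1
        · by_cases ha' : ((p'.1 : ℕ)) < n - 1
          · rw [dif_pos ha, dif_pos ha'] at heq
            simp only [List.cons_append, List.cons.injEq, Prod.mk.injEq] at heq
            obtain ⟨⟨hfst, _⟩, htl⟩ := heq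
            have h11 : p.1 = p'.1 := Fin.ext (by simpa using hfst)
            by_cases hb : ((p.1 + (p.2 : Fin n) : Fin n) : ℕ) < n - 1
            · by_cases hb' : ((p'.1 + (p'.2 : Fin n) : Fin n) : ℕ) < n - 1
              · rw [dif_pos hb, dif_pos hb'] at htl
                simp only [List.cons_append, List.nil_append, List.cons.injEq,
                  Prod.mk.injEq] at htl
                obtain ⟨⟨hend, _⟩, hFF⟩ := htl
                have hee : p.1 + (p.2 : Fin n) = p'.1 + (p'.2 : Fin n) :=
                  Fin.ext (by simpa using hend)
                exact ⟨run_eq_of_ends h11 hee hp2 hp2', hFF⟩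
              · exfalso
                rw [dif_pos hb, dif_neg hb'] at htl
                simp only [List.cons_append, List.nil_append] at htl
                -- htl : (e_p, false) :: F = F'
                cases r' with
                | nil => simp [hF'] at htl
                | cons q r'' =>
                  obtain ⟨hq1, hq2⟩ := hg' q (List.mem_cons_of_mem _ (List.mem_cons_self))
                  have hrc : runChain p' q := (List.isChain_cons_cons.mp hch').1
                  rw [hF', List.map_cons, List.flatten_cons] at htl
                  by_cases hcq : ((q.1 : ℕ)) < n - 1
                  · rw [show tok q = (⟨q.1.val, hcq⟩, true) :: optL (q.1 + (q.2:Fin n)) false by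
                      unfold tok optL; rw [dif_pos hcq]; rfl] at htl
                    simp only [List.cons_append, List.cons.injEq, Prod.mk.injEq] at htl
                    exact Bool.noConfusion htl.1.2
                  · apply hrc
                    exact Fin.ext (by rw [val_last_of_not_lt hcq, val_last_of_not_lt hb'])
            · by_cases hb' : ((p'.1 + (p'.2 : Fin n) : Fin n) : ℕ) < n - 1
              · exfalso
                rw [dif_neg hb, dif_pos hb'] at htl
                simp only [List.cons_append, List.nil_append] at htl
                cases r with
                | nil => simp [hF] at htl
                | cons q r'' =>
                  obtain ⟨hq1, hq2⟩ := hg q (List.mem_cons_of_mem _ (List.mem_cons_self))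
                  have hrc : runChain p q := (List.isChain_cons_cons.mp hch).1
                  rw [hF, List.map_cons, List.flatten_cons] at htl
                  by_cases hcq : ((q.1 : ℕ)) < n - 1
                  · rw [show tok q = (⟨q.1.val, hcq⟩, true) :: optL (q.1 + (q.2:Fin n)) false by
                      unfold tok optL; rw [dif_pos hcq]; rfl] at htl
                    simp only [List.cons_append, List.cons.injEq, Prod.mk.injEq] at htl
                    exact Bool.noConfusion htl.1.2
                  · apply hrc
                    exact Fin.ext (by rw [val_last_of_not_lt hcq, val_last_of_not_lt hb])
              · rw [dif_neg hb, dif_neg hb'] at htl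
                simp only [List.nil_append] at htl
                have hee : p.1 + (p.2 : Fin n) = p'.1 + (p'.2 : Fin n) :=
                  Fin.ext (by rw [val_last_of_not_lt hb, val_last_of_not_lt hb'])
                exact ⟨run_eq_of_ends h11 hee hp2 hp2', htl⟩
          · exfalso
            rw [dif_pos ha, dif_neg ha'] at heq
            by_cases hb' : ((p'.1 + (p'.2 : Fin n) : Fin n) : ℕ) < n - 1
            · rw [dif_pos hb'] at heq
              simp only [List.cons_append, List.nil_append, List.cons.injEq,
                Prod.mk.injEq] at heq
              exact Bool.noConfusion heq.1.2
            · rw [dif_neg hb'] at heq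
              exact tok_ne_nil hp1' hp2' (show tok p' = [] by
                unfold tok optL; rw [dif_neg ha', dif_neg hb']; rfl)
        · by_cases ha' : ((p'.1 : ℕ)) < n - 1
          · exfalso
            rw [dif_neg ha, dif_pos ha'] at heq
            by_cases hb : ((p.1 + (p.2 : Fin n) : Fin n) : ℕ) < n - 1
            · rw [dif_pos hb] at heq
              simp only [List.cons_append, List.nil_append, List.cons.injEq,
                Prod.mk.injEq] at heq
              exact Bool.noConfusion heq.1.2
            · rw [dif_neg hb] at heq
              exact tok_ne_nil hp1 hp2 (show tok p = [] by
                unfold tok optL; rw [dif_neg ha, dif_neg hb]; rfl)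
          · have h11 : p.1 = p'.1 :=
              Fin.ext (by rw [val_last_of_not_lt ha, val_last_of_not_lt ha'])
            rw [dif_neg ha, dif_neg ha'] at heq
            by_cases hb : ((p.1 + (p.2 : Fin n) : Fin n) : ℕ) < n - 1
            · by_cases hb' : ((p'.1 + (p'.2 : Fin n) : Fin n) : ℕ) < n - 1
              · rw [dif_pos hb, dif_pos hb'] at heq
                simp only [List.nil_append, List.cons_append, List.cons.injEq,
                  Prod.mk.injEq] at heq
                obtain ⟨⟨hend, _⟩, hFF⟩ := heq
                have hee : p.1 + (p.2 : Fin n) = p'.1 + (p'.2 : Fin n) :=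
                  Fin.ext (by simpa using hend)
                exact ⟨run_eq_of_ends h11 hee hp2 hp2', hFF⟩
              · exact absurd (show tok p' = [] by
                  unfold tok optL; rw [dif_neg ha', dif_neg hb']; rfl) (tok_ne_nil hp1' hp2')
            · exact absurd (show tok p = [] by
                unfold tok optL; rw [dif_neg ha, dif_neg hb]; rfl) (tok_ne_nil hp1 hp2)
      obtain ⟨hpp, hFF⟩ := htails
      have := ih r' (fun q hq => hg q (List.mem_cons_of_mem _ hq)) hch.tail
        (fun q hq => hg' q (List.mem_cons_of_mem _ hq)) hch'.tail hFF
      rw [hpp, this]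

lemma Lw_chain (u : List (Fin n)) (hu : RotFree u) : List.IsChain NC (Lw u) := by
  rw [Lw]
  exact chain_NC_flatten _ (fun p hp => ⟨splitRuns_pos u p hp, splitRuns_lt u hu p hp⟩)
    (splitRuns_chain u)

lemma rotfree_eq_of_phi1 {u v : List (Fin n)} (hu : RotFree u) (hv : RotFree v)
    (h : phi1 (FreeMonoid.ofList u) = phi1 (FreeMonoid.ofList v)) : u = v := by
  rw [phi1_eq_mk_Lw, phi1_eq_mk_Lw] at h
  have hred := FreeGroup.reduce.sound h
  rw [reduce_eq_self _ (Lw_chain u hu), reduce_eq_self _ (Lw_chain v hv)] at hred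
  rw [Lw, Lw] at hred
  have := tok_flatten_inj (splitRuns u) (splitRuns v)
    (fun p hp => ⟨splitRuns_pos u p hp, splitRuns_lt u hu p hp⟩) (splitRuns_chain u)
    (fun p hp => ⟨splitRuns_pos v p hp, splitRuns_lt v hv p hp⟩) (splitRuns_chain v) hred
  rw [← joinRuns_splitRuns u, ← joinRuns_splitRuns v, this]

/-! ### Noncommutative power series (as plain functions `List α → ℤ`) -/

def Ser (α : Type*) : Type _ := List α → ℤ

namespace Ser

variable {β : Type*} [DecidableEq β]

instance : One (Ser β) := ⟨fun w => if w = [] then 1 else 0⟩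

instance : Mul (Ser β) :=
  ⟨fun f g w => ∑ i ∈ Finset.range (w.length + 1), f (w.take i) * g (w.drop i)⟩

lemma one_apply (w : List β) : (1 : Ser β) w = if w = [] then 1 else 0 := rfl

@[simp] lemma one_apply_nil : (1 : Ser β) [] = 1 := rfl

lemma one_apply_ne (w : List β) (h : w ≠ []) : (1 : Ser β) w = 0 := if_neg h

lemma mul_apply (f g : Ser β) (w : List β) :
    (f * g) w = ∑ i ∈ Finset.range (w.length + 1), f (w.take i) * g (w.drop i) := rfl

protected lemma one_mul (f : Ser β) : 1 * f = f := by
  funext w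
  rw [mul_apply]
  rw [Finset.sum_eq_single 0]
  · simp [one_apply]
  · intro i hi hne
    have hi' : i ≤ w.length := Nat.lt_succ_iff.mp (Finset.mem_range.mp hi)
    have : w.take i ≠ [] := by
      intro hc
      have hl := congrArg List.length hc
      rw [List.length_take] at hl
      simp only [List.length_nil] at hl
      exact hne (by omega)
    rw [one_apply_ne _ this, zero_mul]
  · intro h
    simp at h

protected lemma mul_one (f : Ser β) : f * 1 = f := by
  funext w
  rw [mul_apply]
  rw [Finset.sum_eq_single w.length]
  · simp [one_apply]
  · intro i hi hne
    have hi' : i ≤ w.length := Nat.lt_succ_iff.mp (Finset.mem_range.mp hi)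
    have : w.drop i ≠ [] := by
      intro hc
      have := congrArg List.length hc
      simp at this
      omega
    rw [one_apply_ne _ this, mul_zero]
  · intro h
    simp at h

protected lemma mul_assoc (f g h : Ser β) : f * g * h = f * (g * h) := by
  funext w
  rw [mul_apply, mul_apply]
  have hL : ∀ i ∈ Finset.range (w.length + 1),
      (f * g) (w.take i) * h (w.drop i) =
      ∑ j ∈ Finset.range (i + 1), f (w.take j) * g ((w.drop j).take (i - j)) * h (w.drop i) := by
    intro i hi
    have hi' : i ≤ w.length := Nat.lt_succ_iff.mp (Finset.mem_range.mp hi)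
    rw [mul_apply, List.length_take, min_eq_left hi', Finset.sum_mul]
    apply Finset.sum_congr rfl
    intro j hj
    have hj' : j ≤ i := Nat.lt_succ_iff.mp (Finset.mem_range.mp hj)
    rw [List.take_take, min_eq_left hj', List.drop_take]
  rw [Finset.sum_congr rfl hL]
  have hR2 : ∀ j ∈ Finset.range (w.length + 1),
      f (w.take j) * (g * h) (w.drop j) =
      ∑ d ∈ Finset.range (w.length - j + 1),
        f (w.take j) * (g ((w.drop j).take d) * h (w.drop (j + d))) := by
    intro j hj
    have hj' : j ≤ w.length := Nat.lt_succ_iff.mp (Finset.mem_range.mp hj)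
    rw [mul_apply, List.length_drop, Finset.mul_sum]
    apply Finset.sum_congr rfl
    intro d hd
    rw [List.drop_drop]
  rw [Finset.sum_congr rfl hR2]
  rw [Finset.sum_sigma', Finset.sum_sigma']
  apply Finset.sum_nbij' (fun p => ⟨p.2, p.1 - p.2⟩) (fun p => ⟨p.1 + p.2, p.1⟩)
  · rintro ⟨i, j⟩ hij
    simp only [Finset.mem_sigma, Finset.mem_range] at hij ⊢
    omega
  · rintro ⟨j, d⟩ hjd
    simp only [Finset.mem_sigma, Finset.mem_range] at hjd ⊢
    omega
  · rintro ⟨i, j⟩ hij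
    simp only [Finset.mem_sigma, Finset.mem_range] at hij
    exact congrArg (fun m => (⟨m, j⟩ : (_ : ℕ) × ℕ)) (by omega : j + (i - j) = i)
  · rintro ⟨j, d⟩ hjd
    simp only [Finset.mem_sigma, Finset.mem_range] at hjd
    exact congrArg (fun m => (⟨j, m⟩ : (_ : ℕ) × ℕ)) (by omega : j + d - j = d)
  · rintro ⟨i, j⟩ hij
    simp only [Finset.mem_sigma, Finset.mem_range] at hij
    dsimp only
    have hji : j + (i - j) = i := by omega
    rw [hji, mul_assoc]

instance : Monoid (Ser β) where
  mul_assoc := Ser.mul_assoc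
  one_mul := Ser.one_mul
  mul_one := Ser.mul_one

/-- `1 + x`. -/
def sX (x : β) : Ser β := fun w => if w = [] then 1 else if w = [x] then 1 else 0

/-- `(1+x)⁻¹ = 1 - x + x² - ⋯`. -/
def sGeo (x : β) : Ser β := fun w => if w = List.replicate w.length x then (-1)^w.length else 0

@[simp] lemma sX_nil (x : β) : sX x [] = 1 := rfl
@[simp] lemma sGeo_nil (x : β) : sGeo x [] = 1 := rfl

lemma sGeo_cons (x : β) (t : List β) : sGeo x (x :: t) = - sGeo x t := by
  unfold sGeo
  simp only [List.length_cons, List.replicate_succ, List.cons.injEq, true_and]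
  by_cases h : t = List.replicate t.length x
  · rw [if_pos h, if_pos h, pow_succ]
    ring
  · rw [if_neg h, if_neg h, neg_zero]

lemma sGeo_cons_ne (x a : β) (t : List β) (hax : a ≠ x) : sGeo x (a :: t) = 0 := by
  unfold sGeo
  rw [if_neg]
  simp only [List.length_cons, List.replicate_succ, List.cons.injEq]
  exact fun hc => hax hc.1

lemma sX_mul_sGeo (x : β) : sX x * sGeo x = 1 := by
  funext w
  rw [mul_apply]
  cases w with
  | nil => simp
  | cons a t =>
    rw [one_apply_ne _ (by simp)]
    have h0 : ∀ i ∈ Finset.range ((a :: t).length + 1), i ≠ 0 ∧ i ≠ 1 →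
        sX x ((a :: t).take i) * sGeo x ((a :: t).drop i) = 0 := by
      rintro i hi ⟨h0, h1⟩
      have hi2 : i < t.length + 2 := by simp at hi; omega
      have : sX x ((a :: t).take i) = 0 := by
        unfold sX
        rw [if_neg, if_neg]
        · intro hc
          have hl := congrArg List.length hc
          rw [List.length_take] at hl
          simp only [List.length_cons, List.length_nil] at hl
          omega
        · intro hc
          have hl := congrArg List.length hc
          rw [List.length_take] at hl
          simp only [List.length_cons, List.length_nil] at hl
          omega
      rw [this, zero_mul]
    rw [Finset.sum_eq_add_of_mem 0 1 (by simp) (by simp) (by omega) h0]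
    simp only [List.take_zero, List.drop_zero, sX_nil, one_mul, List.take_succ_cons,
      List.take_zero, List.drop_succ_cons, List.drop_zero]
    by_cases hax : a = x
    · subst hax
      rw [sGeo_cons]
      unfold sX
      rw [if_neg (by simp), if_pos rfl]
      ring
    · rw [sGeo_cons_ne _ _ _ hax]
      unfold sX
      rw [if_neg (by simp), if_neg (by simpa using hax)]
      ring

/-- Reversal is an anti-automorphism. -/
def srev (f : Ser β) : Ser β := fun w => f w.reverse

lemma srev_mul (f g : Ser β) : srev (f * g) = srev g * srev f := by
  funext w
  show (f * g) w.reverse = _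
  rw [mul_apply, mul_apply]
  rw [← Finset.sum_range_reflect]
  simp only [List.length_reverse]
  apply Finset.sum_congr rfl
  intro i hi
  have hi' : i ≤ w.length := Nat.lt_succ_iff.mp (Finset.mem_range.mp hi)
  have hA : w.length - (w.length + 1 - 1 - i) = i := by omega
  have h1 : w.reverse.take (w.length + 1 - 1 - i) = (w.drop i).reverse := by
    rw [List.take_reverse, hA]
  have h2 : w.reverse.drop (w.length + 1 - 1 - i) = (w.take i).reverse := by
    rw [List.drop_reverse, hA]
  rw [h1, h2]
  show f (w.drop i).reverse * g (w.take i).reverse = g (w.take i).reverse * f (w.drop i).reverse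
  exact mul_comm _ _

lemma srev_one : srev (1 : Ser β) = 1 := by
  funext w
  show (1 : Ser β) w.reverse = (1 : Ser β) w
  rw [one_apply, one_apply]
  simp

lemma srev_sX (x : β) : srev (sX x) = sX x := by
  funext w
  show sX x w.reverse = sX x w
  unfold sX
  rcases eq_or_ne w [] with rfl | h0
  · rfl
  · rw [if_neg (by simpa using h0), if_neg h0]
    rcases eq_or_ne w [x] with rfl | h1
    · simp
    · rw [if_neg, if_neg h1]
      intro hc
      apply h1
      rw [← List.reverse_reverse w, hc]
      simp

lemma srev_sGeo (x : β) : srev (sGeo x) = sGeo x := by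
  funext w
  show sGeo x w.reverse = _
  unfold sGeo
  simp only [List.length_reverse]
  by_cases h : w = List.replicate w.length x
  · have hrev : w.reverse = List.replicate w.length x := by
      conv_lhs => rw [h]
      rw [List.reverse_replicate]
    rw [if_pos hrev, if_pos h]
  · rw [if_neg, if_neg h]
    intro hc
    apply h
    rw [← List.reverse_reverse w, hc, List.reverse_replicate]
    simp

lemma sGeo_mul_sX (x : β) : sGeo x * sX x = 1 := by
  have := congrArg srev (sX_mul_sGeo x)
  rw [srev_mul, srev_sX, srev_sGeo, srev_one] at this
  exact this

/-- `1 + x` as a unit. -/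
def uX (x : β) : (Ser β)ˣ := ⟨sX x, sGeo x, sX_mul_sGeo x, sGeo_mul_sX x⟩

/-! ### Coefficient lemmas for powers -/

def PowProps (x : β) (z : ℤ) (P : Ser β) : Prop :=
  P [] = 1 ∧ P [x] = z ∧ ∀ w, P w ≠ 0 → w = List.replicate w.length x

lemma powProps_sX (x : β) : PowProps x 1 (sX x) := by
  refine ⟨rfl, by unfold sX; rw [if_neg (by simp), if_pos rfl], ?_⟩
  intro w hw
  unfold sX at hw
  by_cases h0 : w = []
  · subst h0; rfl
  · rw [if_neg h0] at hw
    by_cases h1 : w = [x]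
    · subst h1; rfl
    · rw [if_neg h1] at hw; exact absurd rfl hw

lemma powProps_sGeo (x : β) : PowProps x (-1) (sGeo x) := by
  refine ⟨rfl, by unfold sGeo; simp, ?_⟩
  intro w hw
  unfold sGeo at hw
  by_cases h0 : w = List.replicate w.length x
  · exact h0
  · rw [if_neg h0] at hw; exact absurd rfl hw

lemma powProps_mul {x : β} {z₁ z₂ : ℤ} {P Q : Ser β}
    (hP : PowProps x z₁ P) (hQ : PowProps x z₂ Q) : PowProps x (z₁ + z₂) (P * Q) := by
  obtain ⟨hP0, hP1, hPs⟩ := hP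
  obtain ⟨hQ0, hQ1, hQs⟩ := hQ
  refine ⟨?_, ?_, ?_⟩
  · rw [mul_apply]
    simp [hP0, hQ0]
  · rw [mul_apply]
    show ∑ i ∈ Finset.range 2, P (List.take i [x]) * Q (List.drop i [x]) = z₁ + z₂
    rw [Finset.sum_range_succ, Finset.sum_range_succ, Finset.sum_range_zero]
    have e0 : P (List.take 0 [x]) * Q (List.drop 0 [x]) = z₂ := by
      rw [List.take_zero, List.drop_zero, hP0, hQ1, one_mul]
    have e1 : P (List.take 1 [x]) * Q (List.drop 1 [x]) = z₁ := by
      rw [show List.take 1 [x] = [x] from rfl, show List.drop 1 [x] = [] from rfl,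
        hP1, hQ0, mul_one]
    rw [e0, e1]
    ring
  · intro w hw
    rw [mul_apply] at hw
    obtain ⟨i, _, hterm⟩ := Finset.exists_ne_zero_of_sum_ne_zero hw
    have hT := hPs _ (left_ne_zero_of_mul hterm)
    have hD := hQs _ (right_ne_zero_of_mul hterm)
    set a := (w.take i).length with ha
    set b := (w.drop i).length with hb
    have hw2 : w = List.replicate (a + b) x := by
      calc w = w.take i ++ w.drop i := (List.take_append_drop i w).symm
      _ = List.replicate a x ++ List.replicate b x := by rw [← hT, ← hD]
      _ = List.replicate (a + b) x := (List.replicate_add _ _ _).symm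
    have hlen : w.length = a + b := by rw [hw2, List.length_replicate]
    rw [hlen]
    exact hw2

lemma powProps_pow (x : β) (m : ℕ) : PowProps x (m : ℤ) (((uX x)^m : (Ser β)ˣ).val) := by
  induction m with
  | zero => exact ⟨rfl, rfl, fun w hw => by
      rw [pow_zero] at hw
      by_cases h : w = []
      · subst h; rfl
      · exact absurd (one_apply_ne w h) hw⟩
  | succ m ih =>
    rw [pow_succ, Units.val_mul]
    have := powProps_mul ih (powProps_sX x)
    rwa [show ((m : ℤ) + 1) = ((m+1 : ℕ) : ℤ) by push_cast; ring] at this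

lemma powProps_pow_inv (x : β) (m : ℕ) :
    PowProps x (-(m : ℤ)) ((((uX x)⁻¹)^m : (Ser β)ˣ).val) := by
  induction m with
  | zero => exact ⟨rfl, rfl, fun w hw => by
      rw [pow_zero] at hw
      by_cases h : w = []
      · subst h; rfl
      · exact absurd (one_apply_ne w h) hw⟩
  | succ m ih =>
    rw [pow_succ, Units.val_mul]
    have hgeo : (((uX x)⁻¹ : (Ser β)ˣ)).val = sGeo x := rfl
    have := powProps_mul ih (hgeo ▸ powProps_sGeo x)
    rwa [show (-(m : ℤ) + (-1)) = -((m+1 : ℕ) : ℤ) by push_cast; ring] at this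

lemma powProps_zpow (x : β) (z : ℤ) : PowProps x z (((uX x)^z : (Ser β)ˣ).val) := by
  cases z with
  | ofNat m => rw [Int.ofNat_eq_coe, zpow_natCast]; exact powProps_pow x m
  | negSucc m =>
    rw [zpow_negSucc, ← inv_pow]
    have := powProps_pow_inv x (m+1)
    rwa [show (-((m+1 : ℕ) : ℤ)) = Int.negSucc m by rw [Int.negSucc_eq]; push_cast; ring] at this

/-! ### Block counting -/

def bc : List β → ℕ
  | [] => 0
  | [_] => 1
  | a :: b :: t => (if a = b then 0 else 1) + bc (b :: t)

lemma bc_pos (w : List β) (h : w ≠ []) : 1 ≤ bc w := by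
  induction w with
  | nil => exact absurd rfl h
  | cons a t ih =>
    cases t with
    | nil => simp [bc]
    | cons b t' =>
      show 1 ≤ (if a = b then 0 else 1) + bc (b :: t')
      have := ih (by simp)
      omega

lemma bc_cons_le (a : β) (l : List β) : bc (a :: l) ≤ 1 + bc l := by
  cases l with
  | nil => simp [bc]
  | cons b t => show (if a = b then 0 else 1) + bc (b :: t) ≤ 1 + bc (b :: t); split <;> omega

lemma bc_append_le (u v : List β) : bc (u ++ v) ≤ bc u + bc v := by
  induction u with
  | nil => simp [bc]
  | cons a u' ih =>
    cases u' with
    | nil =>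
      show bc (a :: v) ≤ bc [a] + bc v
      have := bc_cons_le a v
      simp only [bc] at *
      omega
    | cons b u'' =>
      show bc (a :: b :: (u'' ++ v)) ≤ bc (a :: b :: u'') + bc v
      have h1 : bc (a :: b :: (u'' ++ v)) = (if a = b then 0 else 1) + bc (b :: (u'' ++ v)) := rfl
      have h2 : bc (a :: b :: u'') = (if a = b then 0 else 1) + bc (b :: u'') := rfl
      have h3 : bc ((b :: u'') ++ v) ≤ bc (b :: u'') + bc v := ih
      simp only [List.cons_append] at h3
      omega

lemma bc_replicate (m : ℕ) (x : β) : bc (List.replicate m x) ≤ 1 := by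
  induction m with
  | zero => simp [bc]
  | succ m ih =>
    cases m with
    | zero => simp [bc]
    | succ m' =>
      show bc (x :: x :: List.replicate m' x) ≤ 1
      have : bc (x :: x :: List.replicate m' x) =
          (if x = x then 0 else 1) + bc (x :: List.replicate m' x) := rfl
      rw [this, if_pos rfl, zero_add]
      exact ih

lemma bc_chain_ne (w : List β) (h : List.IsChain (· ≠ ·) w) : bc w = w.length := by
  induction w with
  | nil => rfl
  | cons a t ih =>
    cases t with
    | nil => rfl
    | cons b t' =>
      have hab : a ≠ b := (List.isChain_cons_cons.mp h).1
      show (if a = b then 0 else 1) + bc (b :: t') = t'.length + 1 + 1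
      rw [if_neg hab, ih h.tail]
      simp
      omega

/-! ### Vanishing and the main coefficient formula -/

lemma blocks_vanish : ∀ (B : List (β × ℤ)) (w : List β), B.length < bc w →
    (((B.map fun p => ((uX p.1)^p.2 : (Ser β)ˣ)).prod).val) w = 0 := by
  intro B
  induction B with
  | nil =>
    intro w hw
    simp only [List.length_nil] at hw
    have : w ≠ [] := by
      intro h; subst h; simp [bc] at hw
    simpa using one_apply_ne w this
  | cons p R ih =>
    intro w hw
    rw [List.map_cons, List.prod_cons, Units.val_mul, mul_apply]
    apply Finset.sum_eq_zero
    intro i _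
    by_cases hz : (((uX p.1)^p.2 : (Ser β)ˣ).val) (w.take i) = 0
    · rw [hz, zero_mul]
    · have hT := (powProps_zpow p.1 p.2).2.2 _ hz
      have hbc : R.length < bc (w.drop i) := by
        have h1 : bc w ≤ bc (w.take i) + bc (w.drop i) := by
          conv_lhs => rw [← List.take_append_drop i w]
          exact bc_append_le _ _
        have h2 : bc (w.take i) ≤ 1 := by rw [hT]; exact bc_replicate _ _
        simp only [List.length_cons] at hw
        omega
      rw [ih _ hbc, mul_zero]

lemma blocks_coeff : ∀ (B : List (β × ℤ)), List.IsChain (fun p q => p.1 ≠ q.1) B →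
    (((B.map fun p => ((uX p.1)^p.2 : (Ser β)ˣ)).prod).val) (B.map Prod.fst) =
      (B.map Prod.snd).prod := by
  intro B
  induction B with
  | nil => intro _; rfl
  | cons p R ih =>
    intro hch
    rw [List.map_cons, List.prod_cons, Units.val_mul, mul_apply]
    rw [Finset.sum_eq_single 1]
    · simp only [List.map_cons, List.take_succ_cons, List.take_zero, List.drop_succ_cons,
        List.drop_zero]
      rw [(powProps_zpow p.1 p.2).2.1, ih hch.tail, List.prod_cons]
    · intro i hi hne
      rcases Nat.lt_or_ge i 1 with h1 | h1
      · interval_cases i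
        · simp only [List.take_zero, List.drop_zero]
          rw [(powProps_zpow p.1 p.2).1, one_mul]
          apply blocks_vanish
          have hchain : List.IsChain (· ≠ ·) ((p :: R).map Prod.fst) :=
            List.isChain_map_of_isChain Prod.fst (fun _ _ h => h) hch
          rw [bc_chain_ne _ hchain]
          simp
      · -- i ≥ 2
        have h2 : 2 ≤ i := by omega
        cases R with
        | nil =>
          exfalso
          simp only [List.map_cons, List.map_nil, List.length_cons, List.length_nil,
            Finset.mem_range] at hi
          omega
        | cons q R' =>
          have hxq : p.1 ≠ q.1 := (List.isChain_cons_cons.mp hch).1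
          by_cases hz : (((uX p.1)^p.2 : (Ser β)ˣ).val) (((p :: q :: R').map Prod.fst).take i) = 0
          · rw [hz, zero_mul]
          · exfalso
            have hT := (powProps_zpow p.1 p.2).2.2 _ hz
            have hmem : q.1 ∈ ((p :: q :: R').map Prod.fst).take i := by
              obtain ⟨i', rfl⟩ : ∃ i', i = i' + 2 := ⟨i - 2, by omega⟩
              simp
            have := List.eq_of_mem_replicate (hT ▸ hmem)
            exact hxq this.symm
    · intro h1
      exfalso
      apply h1
      simp

/-! ### Blocks of a reduced word -/

def eB (b : Bool) : ℤ := if b then 1 else -1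

lemma eB_ne_zero (b : Bool) : eB b ≠ 0 := by cases b <;> simp [eB]

def consB (x : β × Bool) : List (β × ℤ) → List (β × ℤ)
  | [] => [(x.1, eB x.2)]
  | q :: r => if x.1 = q.1 then (x.1, q.2 + eB x.2) :: r else (x.1, eB x.2) :: q :: r

def toB : List (β × Bool) → List (β × ℤ)
  | [] => []
  | x :: t => consB x (toB t)

lemma consB_ne_nil (x : β × Bool) (l : List (β × ℤ)) : consB x l ≠ [] := by
  cases l with
  | nil => simp [consB]
  | cons q r =>
    show (if x.1 = q.1 then (x.1, q.2 + eB x.2) :: r else (x.1, eB x.2) :: q :: r) ≠ []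
    split <;> simp

lemma toB_eq_nil (t : List (β × Bool)) (h : toB t = []) : t = [] := by
  cases t with
  | nil => rfl
  | cons x t' => exact absurd h (consB_ne_nil _ _)

lemma mk_cons_pow (x : β × Bool) (t : List (β × Bool)) :
    FreeGroup.mk (x :: t) = (FreeGroup.of x.1)^(eB x.2) * FreeGroup.mk t := by
  have : (x :: t) = [x] ++ t := rfl
  rw [this, ← FreeGroup.mul_mk]
  congr 1
  obtain ⟨a, b⟩ := x
  cases b with
  | true =>
    show FreeGroup.mk [(a, true)] = FreeGroup.of a ^ (1 : ℤ)
    rw [zpow_one]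
    rfl
  | false =>
    show FreeGroup.mk [(a, false)] = FreeGroup.of a ^ (-1 : ℤ)
    rw [zpow_neg_one]
    rw [show ([(a, false)]) = FreeGroup.invRev [(a, true)] by simp [FreeGroup.invRev]]
    rw [← FreeGroup.inv_mk]
    rfl

def prodB (B : List (β × ℤ)) : FreeGroup β := (B.map fun p => (FreeGroup.of p.1)^p.2).prod

lemma toB_good : ∀ (w : List (β × Bool)), List.IsChain NC w →
    List.IsChain (fun p q : β × ℤ => p.1 ≠ q.1) (toB w) ∧
    (∀ p ∈ toB w, p.2 ≠ 0) ∧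
    (FreeGroup.mk w = prodB (toB w)) ∧
    (∀ x t, w = x :: t → ∃ z r, toB w = (x.1, z) :: r ∧ (if x.2 then 0 < z else z < 0)) := by
  intro w
  induction w with
  | nil =>
    intro _
    exact ⟨by simp [toB], by simp [toB], FreeGroup.one_eq_mk.symm, fun x t hxt => by simp at hxt⟩
  | cons x t ih =>
    intro hch
    obtain ⟨ih1, ih2, ih3, ih4⟩ := ih hch.tail
    cases t with
    | nil =>
      have he : toB [x] = [(x.1, eB x.2)] := rfl
      refine ⟨by rw [he]; simp, ?_, ?_, ?_⟩
      · rw [he]; intro p hp; simp at hp; subst hp; exact eB_ne_zero _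
      · rw [he, prodB, List.map_cons, List.map_nil, List.prod_cons, List.prod_nil, mul_one,
          mk_cons_pow]
        rw [show FreeGroup.mk [] = 1 from FreeGroup.one_eq_mk.symm, mul_one]
      · intro y s hys
        injection hys with h1 h2
        subst h1
        subst h2
        exact ⟨eB x.2, [], he, by cases hb : x.2 <;> simp [eB, hb]⟩
    | cons y t' =>
      obtain ⟨z, r₀, hz1, hz2⟩ := ih4 y t' rfl
      have hNC : NC x y := (List.isChain_cons_cons.mp hch).1
      by_cases hxy : x.1 = y.1
      · have hb : x.2 = y.2 := by
          rcases Bool.eq_or_eq_not x.2 y.2 with h | h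
          · exact h
          · exact absurd ⟨hxy, h⟩ hNC
        have he : toB (x :: y :: t') = (x.1, z + eB x.2) :: r₀ := by
          show consB x (toB (y :: t')) = _
          rw [hz1]
          simp [consB, hxy]
        have hsign : if x.2 then 0 < z + eB x.2 else z + eB x.2 < 0 := by
          unfold eB
          rw [hb]
          cases hyb : y.2 <;> rw [hyb] at hz2 <;>
            simp only [if_true, if_false, Bool.false_eq_true] at hz2 ⊢ <;> omega
        have hz' : z + eB x.2 ≠ 0 := by
          cases hb2 : x.2 <;> rw [hb2] at hsign <;>
            simp only [if_true, if_false, Bool.false_eq_true] at hsign <;> omega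
        refine ⟨?_, ?_, ?_, ?_⟩
        · rw [he]
          rw [hz1] at ih1
          rw [List.isChain_cons] at ih1 ⊢
          refine ⟨?_, ih1.2⟩
          intro p hp
          have := ih1.1 p hp
          simpa [hxy] using this
        · rw [he]
          intro p hp
          rcases List.mem_cons.mp hp with rfl | hp
          · exact hz'
          · exact ih2 p (by rw [hz1]; exact List.mem_cons_of_mem _ hp)
        · rw [he, mk_cons_pow, ih3, hz1, prodB, prodB, List.map_cons, List.map_cons,
            List.prod_cons, List.prod_cons, ← mul_assoc]
          congr 1
          show (FreeGroup.of x.1)^(eB x.2) * (FreeGroup.of y.1)^z = (FreeGroup.of x.1)^(z + eB x.2)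
          rw [hxy, ← zpow_add, add_comm]
        · intro x' t'' hx
          injection hx with h1 h2
          subst h1
          exact ⟨z + eB x.2, r₀, he, hsign⟩
      · have he : toB (x :: y :: t') = (x.1, eB x.2) :: (y.1, z) :: r₀ := by
          show consB x (toB (y :: t')) = _
          rw [hz1]
          simp [consB, hxy]
        refine ⟨?_, ?_, ?_, ?_⟩
        · rw [he, List.isChain_cons_cons]
          exact ⟨by simpa using hxy, by rw [← hz1]; exact ih1⟩
        · rw [he]
          intro p hp
          rcases List.mem_cons.mp hp with rfl | hp
          · exact eB_ne_zero _
          · exact ih2 p (by rw [hz1]; exact hp)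
        · rw [he, mk_cons_pow, ih3, hz1, prodB, prodB, List.map_cons, List.prod_cons]
          rfl
        · intro x' t'' hx
          injection hx with h1 h2
          subst h1
          exact ⟨eB x.2, (y.1, z) :: r₀, he, by cases hb : x.2 <;> simp [eB, hb]⟩

end Ser

/-! ### The Magnus homomorphism -/

def mu {β : Type*} [DecidableEq β] : FreeGroup β →* (Ser β)ˣ := FreeGroup.lift fun x => Ser.uX x

section Magnus

variable {β : Type*} [DecidableEq β]

lemma not_chain'_NC_decomp : ∀ (w : List (β × Bool)), ¬ List.IsChain NC w →
    ∃ (L₁ : List (β × Bool)) (x : β) (b : Bool) (L₂ : List (β × Bool)),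
      w = L₁ ++ (x, b) :: (x, !b) :: L₂ := by
  intro w
  induction w with
  | nil => intro h; exact absurd List.isChain_nil h
  | cons a t ih =>
    intro h
    rw [List.isChain_cons] at h
    push_neg at h
    by_cases hA : ∀ y ∈ t.head?, NC a y
    · obtain ⟨L₁, x, b, L₂, rfl⟩ := ih (h hA)
      exact ⟨a :: L₁, x, b, L₂, rfl⟩
    · push_neg at hA
      obtain ⟨y, hy, hNCn⟩ := hA
      cases t with
      | nil => simp at hy
      | cons y' t'' =>
        have hyy : y' = y := by simpa using hy
        subst hyy
        simp only [NC, not_not] at hNCn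
        obtain ⟨h1, h2⟩ := hNCn
        refine ⟨[], a.1, a.2, t'', ?_⟩
        simp only [List.nil_append]
        have ha : (a.1, a.2) = a := Prod.mk.eta
        have hy2 : (a.1, !a.2) = y' := by
          obtain ⟨c1, c2⟩ := y'
          simp only [Prod.mk.injEq]
          exact ⟨h1, by rw [h2]; simp⟩
        rw [ha, hy2]

lemma chain'_NC_toWord (g : FreeGroup β) : List.IsChain NC g.toWord := by
  by_contra h
  obtain ⟨L₁, x, b, L₂, hdec⟩ := not_chain'_NC_decomp _ h
  exact FreeGroup.reduce.not (L₁ := g.toWord) (by rw [FreeGroup.reduce_toWord]; exact hdec)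

lemma list_prod_int_ne_zero : ∀ (l : List ℤ), (∀ x ∈ l, x ≠ 0) → l.prod ≠ 0 := by
  intro l
  induction l with
  | nil => intro _; simp
  | cons a t ih =>
    intro h
    rw [List.prod_cons]
    exact mul_ne_zero (h a (List.mem_cons_self)) (ih fun x hx => h x (List.mem_cons_of_mem _ hx))

lemma mu_ne_one {g : FreeGroup β} (hg : g ≠ 1) : mu g ≠ 1 := by
  have hred := chain'_NC_toWord g
  obtain ⟨h1, h2, h3, _⟩ := Ser.toB_good g.toWord hred
  set B := Ser.toB g.toWord with hB
  have hBne : B ≠ [] := by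
    intro hc
    exact hg (FreeGroup.toWord_eq_nil_iff.mp (Ser.toB_eq_nil _ (hB ▸ hc)))
  intro hmu
  have hg' : mu g = (B.map fun p => ((Ser.uX p.1)^p.2 : (Ser β)ˣ)).prod := by
    conv_lhs => rw [← FreeGroup.mk_toWord (x := g)]
    rw [h3, Ser.prodB, map_list_prod, List.map_map]
    congr 1
    apply List.map_congr_left
    intro p _
    show mu ((FreeGroup.of p.1)^p.2) = _
    rw [map_zpow]
    congr 1
    exact FreeGroup.lift_apply_of
  have hcoeff := Ser.blocks_coeff B h1
  rw [← hg', hmu] at hcoeff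
  have hne : (B.map Prod.snd).prod ≠ 0 :=
    list_prod_int_ne_zero _ (by
      intro x hx
      obtain ⟨p, hp, rfl⟩ := List.mem_map.mp hx
      exact h2 p hp)
  apply hne
  rw [← hcoeff]
  show (1 : Ser β) (B.map Prod.fst) = 0
  apply Ser.one_apply_ne
  intro hc
  exact hBne (List.map_eq_nil_iff.mp hc)

lemma mu_injective : Function.Injective (mu (β := β)) := by
  intro a b hab
  by_contra hne
  have h1 : a * b⁻¹ ≠ 1 := fun hc => hne (by rwa [mul_inv_eq_one] at hc)
  apply mu_ne_one h1
  rw [map_mul, map_inv, hab, mul_inv_cancel]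

end Magnus

/-! ### First-difference positivity -/

section PosSec

variable {β : Type*} [LinearOrder β] [Fintype β] [DecidableEq β]

def ordLT (v w : List β) : Prop := v.length < w.length ∨ (v.length = w.length ∧ v < w)

lemma ordLT_trans {a b c : List β} (h1 : ordLT a b) (h2 : ordLT b c) : ordLT a c := by
  rcases h1 with h1 | ⟨h1, h1'⟩ <;> rcases h2 with h2 | ⟨h2, h2'⟩
  · exact Or.inl (h1.trans h2)
  · exact Or.inl (h2 ▸ h1)
  · exact Or.inl (h1 ▸ h2)
  · exact Or.inr ⟨h1.trans h2, h1'.trans h2'⟩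

lemma ordLT_irrefl (a : List β) : ¬ ordLT a a := by
  intro h
  rcases h with h | ⟨_, h⟩
  · exact lt_irrefl _ h
  · exact lt_irrefl _ h

lemma ordLT_trichotomy (a b : List β) : a = b ∨ ordLT a b ∨ ordLT b a := by
  rcases lt_trichotomy a.length b.length with h | h | h
  · exact Or.inr (Or.inl (Or.inl h))
  · rcases lt_trichotomy a b with h' | h' | h'
    · exact Or.inr (Or.inl (Or.inr ⟨h, h'⟩))
    · exact Or.inl h'
    · exact Or.inr (Or.inr (Or.inr ⟨h.symm, h'⟩))
  · exact Or.inr (Or.inr (Or.inl h))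

def Pos (D : List β → ℤ) : Prop := ∃ μ, 0 < D μ ∧ ∀ ν, ordLT ν μ → D ν = 0

open Classical in
lemma exists_ord_min (D : List β → ℤ) (hD : ∃ w, D w ≠ 0) :
    ∃ μ, D μ ≠ 0 ∧ ∀ ν, ordLT ν μ → D ν = 0 := by
  classical
  have hL : ∃ m, ∃ w : List β, w.length = m ∧ D w ≠ 0 := by
    obtain ⟨w, hw⟩ := hD
    exact ⟨w.length, w, rfl, hw⟩
  set L := Nat.find hL with hLdef
  obtain ⟨w₀, hw0len, hw0⟩ := Nat.find_spec hL
  set S : Finset (List β) :=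
    ((Finset.univ : Finset (Fin L → β)).image (fun f => List.ofFn f)).filter
      (fun w => D w ≠ 0) with hS
  have hw0S : w₀ ∈ S := by
    rw [hS, Finset.mem_filter, Finset.mem_image]
    refine ⟨⟨fun i => w₀[(i : ℕ)]'(by omega), Finset.mem_univ _, ?_⟩, hw0⟩
    apply List.ext_getElem
    · simp [hw0len, hLdef]
    · intro i h1 h2
      simp
  have hSne : S.Nonempty := ⟨w₀, hw0S⟩
  have hlenS : ∀ w ∈ S, w.length = L := by
    intro w hw
    rw [hS, Finset.mem_filter, Finset.mem_image] at hw
    obtain ⟨⟨f, _, rfl⟩, _⟩ := hw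
    simp
  refine ⟨S.min' hSne, (Finset.mem_filter.mp (S.min'_mem hSne)).2, ?_⟩
  intro ν hν
  by_contra hν0
  have hμlen : (S.min' hSne).length = L := hlenS _ (S.min'_mem hSne)
  rcases hν with h | ⟨h, h'⟩
  · rw [hμlen] at h
    exact Nat.find_min hL h ⟨ν, rfl, hν0⟩
  · have hνS : ν ∈ S := by
      rw [hS, Finset.mem_filter, Finset.mem_image]
      refine ⟨⟨fun i => ν[(i : ℕ)]'(by rw [h, hμlen] at *; omega), Finset.mem_univ _, ?_⟩, hν0⟩
      apply List.ext_getElem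
      · simp [h, hμlen]
      · intro i h1 h2
        simp
    exact absurd h' (not_lt.mpr (S.min'_le ν hνS))

lemma pos_or_pos_neg (D : List β → ℤ) (hD : ∃ w, D w ≠ 0) :
    Pos D ∨ Pos (fun w => -D w) := by
  obtain ⟨μ, hμ, hmin⟩ := exists_ord_min D hD
  rcases lt_or_gt_of_ne hμ with h | h
  · right
    exact ⟨μ, by dsimp only; omega, fun ν hν => by dsimp only; rw [hmin ν hν]; ring⟩
  · left
    exact ⟨μ, h, hmin⟩

lemma not_pos_both (D : List β → ℤ) (h1 : Pos D) (h2 : Pos (fun w => -D w)) : False := by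
  obtain ⟨μ, hμ, hmin⟩ := h1
  obtain ⟨μ', hμ', hmin'⟩ := h2
  dsimp only at hμ'
  rcases ordLT_trichotomy μ μ' with h | h | h
  · subst h; omega
  · have := hmin' μ h; dsimp only at this; omega
  · have := hmin μ' h; omega

lemma pos_add {D E : List β → ℤ} (h1 : Pos D) (h2 : Pos E) : Pos (fun w => D w + E w) := by
  obtain ⟨μ, hμ, hmin⟩ := h1
  obtain ⟨μ', hμ', hmin'⟩ := h2
  rcases ordLT_trichotomy μ μ' with h | h | h
  · subst h
    exact ⟨μ, by dsimp only; omega, fun ν hν => by dsimp only; rw [hmin ν hν, hmin' ν hν]; ring⟩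
  · refine ⟨μ, ?_, ?_⟩
    · dsimp only; rw [hmin' μ h]; omega
    · intro ν hν
      dsimp only
      rw [hmin ν hν, hmin' ν (ordLT_trans hν h)]
      ring
  · refine ⟨μ', ?_, ?_⟩
    · dsimp only; rw [hmin μ' h]; omega
    · intro ν hν
      dsimp only
      rw [hmin' ν hν, hmin ν (ordLT_trans hν h)]
      ring

lemma ordLT_len_le {a b : List β} (h : ordLT a b) : a.length ≤ b.length := by
  rcases h with h | ⟨h, _⟩ <;> omega

lemma pos_conv_left (h D : List β → ℤ) (hh : h [] = 1) (hD : Pos D) :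
    Pos (fun w => ∑ i ∈ Finset.range (w.length + 1), h (w.take i) * D (w.drop i)) := by
  obtain ⟨μ, hμ, hmin⟩ := hD
  refine ⟨μ, ?_, ?_⟩
  · dsimp only
    rw [Finset.sum_eq_single 0]
    · simpa [hh] using hμ
    · intro i hi hne
      have hi' : i ≤ μ.length := Nat.lt_succ_iff.mp (Finset.mem_range.mp hi)
      rw [hmin (μ.drop i) (Or.inl (by simp; omega)), mul_zero]
    · intro h0; simp at h0
  · intro ν hν
    dsimp only
    apply Finset.sum_eq_zero
    intro i hi
    rcases Nat.eq_zero_or_pos i with rfl | hipos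
    · rw [List.take_zero, List.drop_zero, hmin ν (by simpa using hν), mul_zero]
    · have hi' : i ≤ ν.length := Nat.lt_succ_iff.mp (Finset.mem_range.mp hi)
      have hlen := ordLT_len_le hν
      rw [hmin (ν.drop i) (Or.inl (by simp; omega)), mul_zero]

lemma pos_conv_right (h D : List β → ℤ) (hh : h [] = 1) (hD : Pos D) :
    Pos (fun w => ∑ i ∈ Finset.range (w.length + 1), D (w.take i) * h (w.drop i)) := by
  obtain ⟨μ, hμ, hmin⟩ := hD
  refine ⟨μ, ?_, ?_⟩
  · dsimp only
    rw [Finset.sum_eq_single μ.length]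
    · simpa [hh] using hμ
    · intro i hi hne
      have hi' : i ≤ μ.length := Nat.lt_succ_iff.mp (Finset.mem_range.mp hi)
      rw [hmin (μ.take i) (Or.inl (by simp; omega)), zero_mul]
    · intro h0; simp at h0
  · intro ν hν
    dsimp only
    apply Finset.sum_eq_zero
    intro i hi
    have hi' : i ≤ ν.length := Nat.lt_succ_iff.mp (Finset.mem_range.mp hi)
    have hlen := ordLT_len_le hν
    rcases Nat.lt_or_ge i ν.length with hilt | hige
    · rw [hmin (ν.take i) (Or.inl (by simp; omega)), zero_mul]
    · have : i = ν.length := by omega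
      subst this
      rw [List.take_length]
      rcases hν with hcase | ⟨hcase, hcase'⟩
      · rw [hmin ν (Or.inl hcase), zero_mul]
      · rw [hmin ν (Or.inr ⟨hcase, hcase'⟩), zero_mul]

end PosSec

namespace Ser
variable {β : Type*} [DecidableEq β]
lemma nil_coeff_mul (f g : Ser β) : (f * g) [] = f [] * g [] := by
  rw [mul_apply]
  simp
end Ser

lemma mu_val_nil {β : Type*} [DecidableEq β] (g : FreeGroup β) : ((mu g).val) [] = 1 := by
  refine FreeGroup.induction_on g ?_ ?_ ?_ ?_
  · rw [map_one]
    rfl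
  · intro x
    show ((mu (FreeGroup.of x)).val) [] = 1
    rw [show mu (FreeGroup.of x) = Ser.uX x from FreeGroup.lift_apply_of]
    rfl
  · intro x _
    rw [map_inv]
    rw [show mu (FreeGroup.of x) = Ser.uX x from FreeGroup.lift_apply_of]
    rfl
  · intro a b ha hb
    rw [map_mul, Units.val_mul, Ser.nil_coeff_mul, ha, hb, mul_one]

lemma pos_congr {β : Type*} [LinearOrder β] [Fintype β] [DecidableEq β]
    {D E : List β → ℤ} (h : ∀ w, D w = E w) (hD : Pos D) : Pos E := by
  have : D = E := funext h
  rwa [← this]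

/-! ### The invariant `Θ` on `Scyc n` -/

section Theta

variable {n : ℕ} [NeZero n]

lemma theta_rel : ∀ x y, cycRel n x y →
    (mu.comp (phi1 (n := n))) x = (mu.comp (phi1 (n := n))) y := by
  rintro x y ⟨hx, k, hy⟩
  subst hx
  subst hy
  show mu (phi1 (permWord n 1)) = mu (phi1 (permWord n (finRotate n ^ k)))
  rw [permWord_one, permWord_pow, phi1_rotW, phi1_rotW]

def theta1 : Scyc n →* (Ser (Fin (n-1)))ˣ :=
  Con.lift _ (mu.comp (phi1 (n := n))) (Con.conGen_le.mpr (fun x y h => by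
    rw [Con.ker_rel]; exact theta_rel x y h))

lemma theta1_sq (w : FreeMonoid (Fin n)) : theta1 (sq w) = mu (phi1 w) :=
  Con.lift_mk' _ _

def lenHom : FreeMonoid (Fin n) →* Multiplicative ℕ where
  toFun w := Multiplicative.ofAdd (FreeMonoid.length w)
  map_one' := rfl
  map_mul' x y := by
    show Multiplicative.ofAdd ((x * y).length) = _
    rw [FreeMonoid.length_mul]
    rfl

lemma length_ofList (l : List (Fin n)) : FreeMonoid.length (FreeMonoid.ofList l) = l.length := rfl

lemma lenHom_rel : ∀ x y, cycRel n x y → lenHom x = lenHom y := by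
  rintro x y ⟨hx, k, hy⟩
  subst hx
  subst hy
  show Multiplicative.ofAdd (FreeMonoid.length (permWord n 1)) = _
  rw [permWord_one, permWord_pow]
  show Multiplicative.ofAdd ((rotW (0:Fin n)).length) = Multiplicative.ofAdd ((rotW ((k:ℕ):Fin n)).length)
  rw [rotW, rotW, runW_length, runW_length]

def lenSq : Scyc n →* Multiplicative ℕ :=
  Con.lift _ (lenHom (n := n)) (Con.conGen_le.mpr (fun x y h => by
    rw [Con.ker_rel]; exact lenHom_rel x y h))

def lenq (x : Scyc n) : ℕ := Multiplicative.toAdd (lenSq x)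

lemma lenq_mul (x y : Scyc n) : lenq (x * y) = lenq x + lenq y := by
  unfold lenq
  rw [map_mul]
  rfl

lemma lenSq_sq (w : FreeMonoid (Fin n)) : lenSq (sq w) = lenHom w := Con.lift_mk' _ _

lemma lenq_sq (u : List (Fin n)) : lenq (sq (FreeMonoid.ofList u)) = u.length := by
  unfold lenq
  rw [lenSq_sq]
  rfl

lemma lenq_zq : lenq (zq : Scyc n) = n := by
  rw [zq, lenq_sq, rotW, runW_length]

lemma lenq_pow (x : Scyc n) (m : ℕ) : lenq (x ^ m) = m * lenq x := by
  induction m with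
  | zero =>
    rw [pow_zero, Nat.zero_mul]
    unfold lenq
    rw [map_one]
    rfl
  | succ m ih => rw [pow_succ, lenq_mul, ih]; ring

lemma theta1_zq : theta1 (zq : Scyc n) = 1 := by
  rw [zq, theta1_sq, phi1_rotW, map_one]

lemma exists_nf' (x : Scyc n) : ∃ m u, RotFree (n := n) u ∧
    x = zq ^ m * sq (FreeMonoid.ofList u) := by
  obtain ⟨w, rfl⟩ := Con.mk'_surjective (c := cg n) x
  obtain ⟨m, u, hu, he⟩ := exists_nf (n := n) w.toList
  rw [FreeMonoid.ofList_toList] at he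
  exact ⟨m, u, hu, he ▸ rfl⟩

lemma theta_nf (m : ℕ) (u : List (Fin n)) :
    theta1 ((zq : Scyc n) ^ m * sq (FreeMonoid.ofList u)) = mu (phi1 (FreeMonoid.ofList u)) := by
  rw [map_mul, map_pow, theta1_zq, one_pow, one_mul, theta1_sq]

lemma theta_inj (x y : Scyc n) (h1 : theta1 x = theta1 y) (h2 : lenq x = lenq y) : x = y := by
  obtain ⟨m, u, hu, rfl⟩ := exists_nf' x
  obtain ⟨m', v, hv, rfl⟩ := exists_nf' y
  rw [theta_nf, theta_nf] at h1
  have huv : u = v := rotfree_eq_of_phi1 hu hv (mu_injective h1)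
  subst huv
  rw [lenq_mul, lenq_mul, lenq_pow, lenq_pow, lenq_zq] at h2
  have hmm : m = m' := by
    have := NeZero.pos n
    have h2' : m * n = m' * n := by omega
    exact Nat.eq_of_mul_eq_mul_right (NeZero.pos n) h2'
  rw [hmm]

/-! ### The bi-invariant order -/

def ltS (x y : Scyc n) : Prop :=
  lenq x < lenq y ∨ (lenq x = lenq y ∧
    Pos (fun w => ((theta1 y).val w - (theta1 x).val w : ℤ)))

lemma theta1_nil (x : Scyc n) : ((theta1 x).val) [] = 1 := by
  obtain ⟨w, rfl⟩ := Con.mk'_surjective (c := cg n) x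
  have : (cg n).mk' w = sq w := rfl
  rw [this, theta1_sq]
  exact mu_val_nil _

lemma ltS_irrefl (x : Scyc n) : ¬ ltS x x := by
  rintro (h | ⟨-, μ, hμ, -⟩)
  · omega
  · simp at hμ

lemma ltS_trans {x y z : Scyc n} (h1 : ltS x y) (h2 : ltS y z) : ltS x z := by
  rcases h1 with h1 | ⟨h1, hp1⟩ <;> rcases h2 with h2 | ⟨h2, hp2⟩
  · exact Or.inl (h1.trans h2)
  · exact Or.inl (h2 ▸ h1)
  · exact Or.inl (h1 ▸ h2)
  · refine Or.inr ⟨h1.trans h2, ?_⟩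
    have := pos_add hp2 hp1
    exact pos_congr (fun w => by ring) this

lemma ltS_total (x y : Scyc n) (hne : x ≠ y) : ltS x y ∨ ltS y x := by
  rcases lt_trichotomy (lenq x) (lenq y) with h | h | h
  · exact Or.inl (Or.inl h)
  · have hth : theta1 x ≠ theta1 y := fun hc => hne (theta_inj x y hc h)
    have hval : ∃ w, ((theta1 y).val w - (theta1 x).val w : ℤ) ≠ 0 := by
      by_contra hc
      push_neg at hc
      apply hth
      apply Units.ext
      funext w
      have := hc w
      omega
    rcases pos_or_pos_neg _ hval with hp | hp
    · exact Or.inl (Or.inr ⟨h, hp⟩)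
    · exact Or.inr (Or.inr ⟨h.symm, pos_congr (fun w =>
        show -((theta1 y).val w - (theta1 x).val w) = (theta1 x).val w - (theta1 y).val w
        by ring) hp⟩)
  · exact Or.inr (Or.inl h)

lemma val_mul_sub (A B C : Ser (Fin (n-1))) :
    ∀ w, (A * C) w - (B * C) w =
      ∑ i ∈ Finset.range (w.length + 1), (A (w.take i) - B (w.take i)) * C (w.drop i) := by
  intro w
  rw [Ser.mul_apply, Ser.mul_apply, ← Finset.sum_sub_distrib]
  apply Finset.sum_congr rfl
  intro i _
  ring

lemma val_sub_mul (A B C : Ser (Fin (n-1))) :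
    ∀ w, (C * A) w - (C * B) w =
      ∑ i ∈ Finset.range (w.length + 1), C (w.take i) * (A (w.drop i) - B (w.drop i)) := by
  intro w
  rw [Ser.mul_apply, Ser.mul_apply, ← Finset.sum_sub_distrib]
  apply Finset.sum_congr rfl
  intro i _
  ring

lemma ltS_mul_right {x y : Scyc n} (s : Scyc n) (h : ltS x y) : ltS (x * s) (y * s) := by
  rcases h with h | ⟨h, hp⟩
  · exact Or.inl (by rw [lenq_mul, lenq_mul]; omega)
  · refine Or.inr ⟨by rw [lenq_mul, lenq_mul, h], ?_⟩
    have hpos := pos_conv_right ((theta1 s).val) _ (theta1_nil s) hp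
    apply pos_congr (D := fun w => ∑ i ∈ Finset.range (w.length + 1),
      ((theta1 y).val (w.take i) - (theta1 x).val (w.take i)) * (theta1 s).val (w.drop i))
    · intro w
      rw [map_mul, map_mul, Units.val_mul, Units.val_mul, ← val_mul_sub]
    · exact pos_congr (fun w => rfl) hpos
  
lemma ltS_mul_left {x y : Scyc n} (s : Scyc n) (h : ltS x y) : ltS (s * x) (s * y) := by
  rcases h with h | ⟨h, hp⟩
  · exact Or.inl (by rw [lenq_mul, lenq_mul]; omega)
  · refine Or.inr ⟨by rw [lenq_mul, lenq_mul, h], ?_⟩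
    have hpos := pos_conv_left ((theta1 s).val) _ (theta1_nil s) hp
    apply pos_congr (D := fun w => ∑ i ∈ Finset.range (w.length + 1),
      (theta1 s).val (w.take i) * ((theta1 y).val (w.drop i) - (theta1 x).val (w.drop i)))
    · intro w
      rw [map_mul, map_mul, Units.val_mul, Units.val_mul, ← val_sub_mul]
    · exact pos_congr (fun w => rfl) hpos

lemma exists_ltS_max (A : Finset (Scyc n)) : A.Nonempty → ∃ α ∈ A, ∀ x ∈ A, x ≠ α → ltS x α := by
  classical
  induction A using Finset.induction_on with
  | empty => intro h; simp at h
  | @insert a A' ha ih =>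
    intro _
    rcases A'.eq_empty_or_nonempty with rfl | hA'
    · refine ⟨a, Finset.mem_insert_self _ _, ?_⟩
      intro x hx hxa
      simp only [Finset.mem_insert, Finset.notMem_empty, or_false] at hx
      exact absurd hx hxa
    · obtain ⟨α, hαA, hαmax⟩ := ih hA'
      by_cases hcase : a = α
      · subst hcase
        exact ⟨a, Finset.mem_insert_self _ _, fun x hx hxa => by
          rcases Finset.mem_insert.mp hx with rfl | hx'
          · exact absurd rfl hxa
          · exact hαmax x hx' hxa⟩
      · rcases ltS_total a α hcase with h | h
        · refine ⟨α, Finset.mem_insert_of_mem hαA, ?_⟩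
          intro x hx hxα
          rcases Finset.mem_insert.mp hx with rfl | hx'
          · exact h
          · exact hαmax x hx' hxα
        · refine ⟨a, Finset.mem_insert_self _ _, ?_⟩
          intro x hx hxa
          rcases Finset.mem_insert.mp hx with rfl | hx'
          · exact absurd rfl hxa
          · by_cases hxα : x = α
            · subst hxα; exact h
            · exact ltS_trans (hαmax x hx' hxα) h

end Theta

end S15

open S15 in
/-- if `Q` is a (proper) prime ideal of the monoid `S_n`, then its `K`-linear
span `K[Q]` is a prime two-sided ideal of the monoid algebra `K[S_n]` (two-sidedness,
properness and elementwise primality). -/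
theorem span_of_monoid_prime_is_prime (K : Type*) [Field K] (n : ℕ) (hn : 3 ≤ n)
    (Q : Set (Scyc n))
    (hideal : ∀ q ∈ Q, ∀ s : Scyc n, s * q ∈ Q ∧ q * s ∈ Q)
    (hproper : Q ≠ Set.univ)
    (hprime : ∀ a b : Scyc n, a ∉ Q → b ∉ Q → ∃ s : Scyc n, a * s * b ∉ Q)
    (KQ : Submodule K (MonoidAlgebra K (Scyc n)))
    (hKQ : KQ = Submodule.span K (MonoidAlgebra.of K (Scyc n) '' Q)) :
    (∀ x ∈ KQ, ∀ r : MonoidAlgebra K (Scyc n), r * x ∈ KQ ∧ x * r ∈ KQ) ∧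
    (KQ : Set (MonoidAlgebra K (Scyc n))) ≠ Set.univ ∧
    (∀ a b : MonoidAlgebra K (Scyc n), (∀ r, a * r * b ∈ KQ) → a ∈ KQ ∨ b ∈ KQ) := by
  classical
  haveI : NeZero n := ⟨by omega⟩
  -- membership characterization
  have hmem : ∀ x : MonoidAlgebra K (Scyc n), x ∈ KQ ↔ ∀ t ∈ x.coeff.support, t ∈ Q := by
    intro x
    rw [hKQ]
    constructor
    · intro hx
      let P : Submodule K (MonoidAlgebra K (Scyc n)) :=
        { carrier := {f : MonoidAlgebra K (Scyc n) | ∀ t ∈ f.coeff.support, t ∈ Q}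
          add_mem' := by
            intro f g hf hg t ht
            rcases Finset.mem_union.mp (Finsupp.support_add ht) with h | h
            · exact hf t h
            · exact hg t h
          zero_mem' := by
            intro t ht
            simp at ht
          smul_mem' := by
            intro c f hf t ht
            exact hf t (Finsupp.support_smul ht) }
      have hle : Submodule.span K (MonoidAlgebra.of K (Scyc n) '' Q) ≤ P := by
        rw [Submodule.span_le]
        rintro _ ⟨q, hq, rfl⟩ t ht
        rw [MonoidAlgebra.of_apply, MonoidAlgebra.coeff_single] at ht
        have := Finsupp.support_single_subset ht
        rw [Finset.mem_singleton] at this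
        rwa [this]
      exact hle hx
    · intro hx
      have hx2 : x = x.coeff.sum fun t c => MonoidAlgebra.single t c := (MonoidAlgebra.sum_coeff_single x).symm
      rw [hx2]
      apply Submodule.finsuppSum_mem
      intro t htne
      have ht : t ∈ x.coeff.support := Finsupp.mem_support_iff.mpr htne
      have he : MonoidAlgebra.single t (x.coeff t) = (x.coeff t) • MonoidAlgebra.of K (Scyc n) t := by
        rw [MonoidAlgebra.of_apply, MonoidAlgebra.smul_single', mul_one]
      rw [he]
      exact Submodule.smul_mem _ _ (Submodule.subset_span ⟨t, hx t ht, rfl⟩)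
  refine ⟨?_, ?_, ?_⟩
  · -- two-sided ideal
    intro x hx r
    constructor
    · refine (hmem _).mpr ?_
      intro t ht
      obtain ⟨u, hu, v, hv, rfl⟩ := Finset.mem_mul.mp (MonoidAlgebra.support_coeff_mul_subset r x ht)
      exact (hideal v ((hmem x).mp hx v hv) u).1
    · refine (hmem _).mpr ?_
      intro t ht
      obtain ⟨u, hu, v, hv, rfl⟩ := Finset.mem_mul.mp (MonoidAlgebra.support_coeff_mul_subset x r ht)
      exact (hideal u ((hmem x).mp hx u hu) v).2
  · -- proper
    obtain ⟨s₀, hs₀⟩ := (Set.ne_univ_iff_exists_notMem Q).mp hproper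
    intro hc
    have : MonoidAlgebra.of K (Scyc n) s₀ ∈ KQ := by
      have : MonoidAlgebra.of K (Scyc n) s₀ ∈ (KQ : Set (MonoidAlgebra K (Scyc n))) := by
        rw [hc]; trivial
      exact this
    apply hs₀
    refine (hmem _).mp this s₀ ?_
    rw [MonoidAlgebra.of_apply, MonoidAlgebra.coeff_single]
    rw [Finsupp.mem_support_iff, Finsupp.single_eq_same]
    exact one_ne_zero
  · -- primality
    intro a b hab
    by_contra hcon
    push_neg at hcon
    obtain ⟨ha, hb⟩ := hcon
    have haS : ∃ t ∈ a.coeff.support, t ∉ Q := by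
      by_contra hc
      push_neg at hc
      exact ha ((hmem a).mpr hc)
    have hbS : ∃ t ∈ b.coeff.support, t ∉ Q := by
      by_contra hc
      push_neg at hc
      exact hb ((hmem b).mpr hc)
    set A : Finset (Scyc n) := a.coeff.support.filter (fun t => t ∉ Q) with hA
    set B : Finset (Scyc n) := b.coeff.support.filter (fun t => t ∉ Q) with hB
    have hAne : A.Nonempty := by
      obtain ⟨t, ht1, ht2⟩ := haS
      exact ⟨t, Finset.mem_filter.mpr ⟨ht1, ht2⟩⟩
    have hBne : B.Nonempty := by
      obtain ⟨t, ht1, ht2⟩ := hbS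
      exact ⟨t, Finset.mem_filter.mpr ⟨ht1, ht2⟩⟩
    obtain ⟨α, hαA, hαmax⟩ := exists_ltS_max A hAne
    obtain ⟨β, hβB, hβmax⟩ := exists_ltS_max B hBne
    obtain ⟨hαsupp, hαQ⟩ := Finset.mem_filter.mp hαA
    obtain ⟨hβsupp, hβQ⟩ := Finset.mem_filter.mp hβB
    obtain ⟨s, hs⟩ := hprime α β hαQ hβQ
    have habr := hab (MonoidAlgebra.single s (1 : K))
    -- key uniqueness
    have hkey : ∀ x ∈ a.coeff.support, ∀ y ∈ b.coeff.support, x * s * y = α * s * β → x = α ∧ y = β := by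
      intro x hx y hy hxy
      have hxQ : x ∉ Q := by
        intro hq
        apply hs
        rw [← hxy]
        exact (hideal (x * s) (hideal x hq s).2 y).2
      have hyQ : y ∉ Q := by
        intro hq
        apply hs
        rw [← hxy]
        exact (hideal y hq (x * s)).1
      by_contra hne
      have hxA : x ∈ A := Finset.mem_filter.mpr ⟨hx, hxQ⟩
      have hyB : y ∈ B := Finset.mem_filter.mpr ⟨hy, hyQ⟩
      have hlt : ltS (x * s * y) (α * s * β) := by
        by_cases h1 : x = α
        · subst h1
          have h2 : y ≠ β := fun hc => hne ⟨rfl, hc⟩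
          exact ltS_mul_left (x * s) (hβmax y hyB h2)
        · have hxα : ltS (x * s * y) (α * s * y) :=
            ltS_mul_right y (ltS_mul_right s (hαmax x hxA h1))
          by_cases h2 : y = β
          · subst h2
            exact hxα
          · exact ltS_trans hxα (ltS_mul_left (α * s) (hβmax y hyB h2))
      rw [hxy] at hlt
      exact ltS_irrefl _ hlt
    -- the coefficient computation
    have hstep : a * MonoidAlgebra.single s (1:K) * b =
        a.coeff.sum fun x v => b.coeff.sum fun y w => MonoidAlgebra.single (x * s * y) (v * w) := by
      have h1 : a * MonoidAlgebra.single s (1:K) = a.coeff.sum fun x v =>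
          MonoidAlgebra.single (x * s) v := by
        rw [MonoidAlgebra.mul_def]
        apply Finsupp.sum_congr
        intro x _
        rw [MonoidAlgebra.coeff_single, Finsupp.sum_single_index (by simp), mul_one]
      rw [h1, Finsupp.sum_mul]
      apply Finsupp.sum_congr
      intro x _
      rw [MonoidAlgebra.mul_def, MonoidAlgebra.coeff_single, Finsupp.sum_single_index (by simp)]
    have happ : (a.coeff.sum fun x v => b.coeff.sum fun y w =>
        MonoidAlgebra.single (x * s * y) (v * w)).coeff (α * s * β) = a.coeff α * b.coeff β := by
      simp only [MonoidAlgebra.coeff_finsuppSum, MonoidAlgebra.coeff_single]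
      rw [Finsupp.sum_apply]
      rw [Finsupp.sum, Finset.sum_eq_single α]
      · rw [Finsupp.sum_apply, Finsupp.sum, Finset.sum_eq_single β]
        · rw [Finsupp.single_apply, if_pos rfl]
        · intro y hy hyβ
          rw [Finsupp.single_apply, if_neg]
          intro hc
          exact hyβ (hkey α hαsupp y hy hc).2
        · intro hβn
          exact absurd hβsupp hβn
      · intro x hx hxα
        rw [Finsupp.sum_apply, Finsupp.sum]
        apply Finset.sum_eq_zero
        intro y hy
        rw [Finsupp.single_apply, if_neg]
        intro hc
        exact hxα (hkey x hx y hy hc).1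
      · intro hαn
        exact absurd hαsupp hαn
    have hval : (a * MonoidAlgebra.single s (1:K) * b).coeff (α * s * β) = a.coeff α * b.coeff β := by
      rw [hstep]
      exact happ
    have hTQ : α * s * β ∈ Q := by
      refine (hmem _).mp habr _ ?_
      rw [Finsupp.mem_support_iff, hval]
      exact mul_ne_zero (Finsupp.mem_support_iff.mp hαsupp) (Finsupp.mem_support_iff.mp hβsupp)
    exact hs hTQ
end

section
/- Let n ≥ 3 and let M = S_n(Sym_n) be the monoid presented by generators a_1, …, a_n and relations a_1 a_2 ⋯ a_n = a_{σ(1)} a_{σ(2)} ⋯ a_{σ(n)} for all σ ∈ Sym_n. Then z = a_1 a_2 ⋯ a_n is central in M, and z·M is a prime ideal of the monoid M: for all a, b ∈ M \ zM there exists s ∈ M such that a·s·b ∉ zM. -/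
/-- The defining relations `a_1 a_2 ⋯ a_n = a_{σ(1)} a_{σ(2)} ⋯ a_{σ(n)}` for all
permutations `σ ∈ Sym_n`. -/
def symRel (n : ℕ) : FreeMonoid (Fin n) → FreeMonoid (Fin n) → Prop :=
  fun x y => x = permWord n 1 ∧ ∃ σ : Equiv.Perm (Fin n), y = permWord n σ

/-- The monoid `M = S_n(Sym_n)` presented by generators `a_1, …, a_n` and the above relations. -/
def Msym (n : ℕ) : Type := (conGen (symRel n)).Quotient

instance (n : ℕ) : Monoid (Msym n) := Con.monoid _

/-- The generator `a_i` of `M`. -/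
def mgen {n : ℕ} (i : Fin n) : Msym n := (conGen (symRel n)).mk' (FreeMonoid.of i)

/-- The element `z = a_1 a_2 ⋯ a_n` of `M`. -/
def zs (n : ℕ) : Msym n := ((List.finRange n).map mgen).prod

namespace ZMAux

open FreeMonoid List

variable {n : ℕ}

/-- The canonical projection. -/
def mk (n : ℕ) : FreeMonoid (Fin n) →* Msym n := (conGen (symRel n)).mk'

lemma prod_map_of (f : Fin n → Fin n) (l : List (Fin n)) :
    ((l.map fun i => FreeMonoid.of (f i)).prod) = FreeMonoid.ofList (l.map f) := by
  induction l with
  | nil => rfl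
  | cons a l ih => simp [List.map_cons, FreeMonoid.ofList_cons, ih]

lemma permWord_eq_ofList (σ : Equiv.Perm (Fin n)) :
    permWord n σ = FreeMonoid.ofList ((List.finRange n).map σ) :=
  prod_map_of σ _

lemma length_permWord (σ : Equiv.Perm (Fin n)) :
    (FreeMonoid.toList (permWord n σ)).length = n := by
  rw [permWord_eq_ofList]
  simp

lemma nodup_permWord (σ : Equiv.Perm (Fin n)) :
    (FreeMonoid.toList (permWord n σ)).Nodup := by
  rw [permWord_eq_ofList]
  exact (List.nodup_finRange n).map σ.injective

lemma exists_perm_of_perm {l : List (Fin n)} (h : l.Perm (List.finRange n)) :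
    ∃ σ : Equiv.Perm (Fin n), l = (List.finRange n).map σ := by
  have hlen : l.length = n := by simpa using h.length_eq
  have hnd : l.Nodup := h.nodup_iff.mpr (List.nodup_finRange n)
  have hinj : Function.Injective (fun i : Fin n => l.get (Fin.cast hlen.symm i)) := by
    intro a b hab
    have := List.nodup_iff_injective_get.mp hnd hab
    simpa [Fin.ext_iff] using this
  refine ⟨Equiv.ofBijective _ (Finite.injective_iff_bijective.mp hinj), ?_⟩
  apply List.ext_get
  · simp [hlen]
  · intro i h1 h2
    simp [Equiv.ofBijective_apply]

lemma mk_permWord (σ : Equiv.Perm (Fin n)) :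
    mk n (permWord n σ) = mk n (permWord n 1) := by
  symm
  exact (Con.eq _).mpr (ConGen.Rel.of _ _ ⟨rfl, σ, rfl⟩)

lemma zs_eq : zs n = mk n (permWord n 1) := by
  unfold zs permWord
  rw [MonoidHom.map_list_prod]
  simp only [List.map_map]
  rfl

lemma mk_ofList_perm {l : List (Fin n)} (h : l.Perm (List.finRange n)) :
    mk n (FreeMonoid.ofList l) = zs n := by
  obtain ⟨σ, rfl⟩ := exists_perm_of_perm h
  rw [zs_eq, ← permWord_eq_ofList, mk_permWord]

lemma zs_comm_gen (i : Fin n) : zs n * mgen i = mgen i * zs n := by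
  classical
  have hi : i ∈ List.finRange n := List.mem_finRange i
  set l := (List.finRange n).erase i with hl
  have h1 : (i :: l).Perm (List.finRange n) := (List.perm_cons_erase hi).symm
  have h2 : (l ++ [i]).Perm (List.finRange n) :=
    List.perm_append_comm.trans h1
  have e1 : mgen i * mk n (FreeMonoid.ofList l) = zs n := by
    have := mk_ofList_perm h1
    rw [FreeMonoid.ofList_cons, map_mul] at this
    exact this
  have e2 : mk n (FreeMonoid.ofList l) * mgen i = zs n := by
    have := mk_ofList_perm h2
    rw [FreeMonoid.ofList_append, map_mul] at this
    exact (by simpa [FreeMonoid.ofList_cons] using this :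
      mk n (FreeMonoid.ofList l) * mk n (FreeMonoid.of i) = zs n)
  calc zs n * mgen i = mgen i * mk n (FreeMonoid.ofList l) * mgen i := by rw [e1]
    _ = mgen i * (mk n (FreeMonoid.ofList l) * mgen i) := by rw [mul_assoc]
    _ = mgen i * zs n := by rw [e2]

lemma zs_central (s : Msym n) : zs n * s = s * zs n := by
  induction s using Con.induction_on with
  | H w =>
    change zs n * mk n w = mk n w * zs n
    induction w using FreeMonoid.recOn with
    | one => simp [map_one]
    | of_mul a w ih =>
      have hg : mk n (FreeMonoid.of a) = mgen a := rfl
      rw [map_mul, hg, ← mul_assoc, zs_comm_gen a, mul_assoc, ih, ← mul_assoc]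


/-! ### One-step rewriting and rigidity -/

/-- One rewriting step: replace a `permWord` factor by another. -/
def Step (n : ℕ) (w v : FreeMonoid (Fin n)) : Prop :=
  ∃ (u₁ u₂ : FreeMonoid (Fin n)) (σ τ : Equiv.Perm (Fin n)),
    w = u₁ * permWord n σ * u₂ ∧ v = u₁ * permWord n τ * u₂

lemma Step.symm {w v : FreeMonoid (Fin n)} (h : Step n w v) : Step n v w := by
  obtain ⟨u₁, u₂, σ, τ, hw, hv⟩ := h
  exact ⟨u₁, u₂, τ, σ, hv, hw⟩

lemma Step.context (x y : FreeMonoid (Fin n)) {w v : FreeMonoid (Fin n)} (h : Step n w v) :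
    Step n (x * w * y) (x * v * y) := by
  obtain ⟨u₁, u₂, σ, τ, hw, hv⟩ := h
  refine ⟨x * u₁, u₂ * y, σ, τ, ?_, ?_⟩ <;> subst hw hv <;>
    simp only [mul_assoc]

lemma eqvGen_context (x y : FreeMonoid (Fin n)) {w v : FreeMonoid (Fin n)}
    (h : Relation.EqvGen (Step n) w v) :
    Relation.EqvGen (Step n) (x * w * y) (x * v * y) := by
  induction h with
  | rel a b hab => exact Relation.EqvGen.rel _ _ (hab.context x y)
  | refl a => exact Relation.EqvGen.refl _
  | symm a b _ ih => exact ih.symm _ _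
  | trans a b c _ _ ih1 ih2 => exact ih1.trans _ _ _ ih2

/-- The congruence of iterated rewriting steps. -/
def stepCon (n : ℕ) : Con (FreeMonoid (Fin n)) where
  r := Relation.EqvGen (Step n)
  iseqv := Relation.EqvGen.is_equivalence _
  mul' := by
    intro w x y z h1 h2
    have a1 : Relation.EqvGen (Step n) (w * y) (x * y) := by
      have := eqvGen_context 1 y h1
      simpa using this
    have a2 : Relation.EqvGen (Step n) (x * y) (x * z) := by
      have := eqvGen_context x 1 h2
      simpa using this
    exact a1.trans _ _ _ a2

lemma conGen_imp_eqvGen {w v : FreeMonoid (Fin n)} (h : conGen (symRel n) w v) :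
    Relation.EqvGen (Step n) w v := by
  have hb : ∀ x y, symRel n x y → (stepCon n) x y := by
    rintro x y ⟨hx, σ, hy⟩
    exact Relation.EqvGen.rel _ _ ⟨1, 1, 1, σ, by simp [hx], by simp [hy]⟩
  exact Con.conGen_le.2 hb h

/-- A word with no `permWord` factor. -/
def StepFree (n : ℕ) (w : FreeMonoid (Fin n)) : Prop :=
  ∀ σ : Equiv.Perm (Fin n), ¬ (FreeMonoid.toList (permWord n σ) <:+: FreeMonoid.toList w)

lemma not_step_of_stepFree {w v : FreeMonoid (Fin n)} (hw : StepFree n w) : ¬ Step n w v := by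
  rintro ⟨u₁, u₂, σ, τ, hww, -⟩
  exact hw σ ⟨FreeMonoid.toList u₁, FreeMonoid.toList u₂, by
    subst hww
    simp [FreeMonoid.toList_mul]⟩

lemma rigid {w v : FreeMonoid (Fin n)} (h : Relation.EqvGen (Step n) w v)
    (hw : StepFree n w ∨ StepFree n v) : w = v := by
  induction h with
  | rel a b hab =>
    rcases hw with hw | hw
    · exact absurd hab (not_step_of_stepFree hw)
    · exact absurd (Step.symm hab) (not_step_of_stepFree hw)
  | refl a => rfl
  | symm a b _ ih => exact (ih hw.symm).symm
  | trans a b c _ _ ih1 ih2 =>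
    rcases hw with hw | hw
    · have e1 : a = b := ih1 (Or.inl hw)
      subst e1
      exact ih2 (Or.inl hw)
    · have e2 : b = c := ih2 (Or.inr hw)
      subst e2
      exact ih1 (Or.inr hw)

/-! ### Membership in `zM` -/

lemma mem_zM_of_infix {w : FreeMonoid (Fin n)} {σ : Equiv.Perm (Fin n)}
    (h : FreeMonoid.toList (permWord n σ) <:+: FreeMonoid.toList w) :
    ∃ m, mk n w = zs n * m := by
  obtain ⟨s, t, hst⟩ := h
  have hw : w = FreeMonoid.ofList s * permWord n σ * FreeMonoid.ofList t := by
    apply FreeMonoid.toList.injective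
    simp only [FreeMonoid.toList_mul]
    rw [← hst]
    simp [permWord_eq_ofList]
  refine ⟨mk n (FreeMonoid.ofList s) * mk n (FreeMonoid.ofList t), ?_⟩
  have hz : mk n (permWord n σ) = zs n := by rw [mk_permWord, ← zs_eq]
  rw [hw, map_mul, map_mul, hz, ← zs_central, mul_assoc]

lemma stepFree_of_not_mem {w : FreeMonoid (Fin n)} (h : ¬ ∃ m, mk n w = zs n * m) :
    StepFree n w := by
  intro σ hσ
  exact h (mem_zM_of_infix hσ)

lemma not_mem_of_stepFree {w : FreeMonoid (Fin n)} (h : StepFree n w) :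
    ¬ ∃ m, mk n w = zs n * m := by
  rintro ⟨m, hm⟩
  obtain ⟨m', rfl⟩ := Con.mk'_surjective (c := conGen (symRel n)) m
  have hm2 : mk n w = mk n (permWord n 1 * m') := by
    rw [map_mul, ← zs_eq]; exact hm
  have hcon : conGen (symRel n) w (permWord n 1 * m') := (Con.eq _).mp hm2
  have heq : w = permWord n 1 * m' := rigid (conGen_imp_eqvGen hcon) (Or.inl h)
  exact h 1 ⟨[], FreeMonoid.toList m', by rw [heq]; simp [FreeMonoid.toList_mul]⟩

/-! ### The infix splitting lemma -/

lemma infix_split {α : Type*} {p l₁ l₂ : List α} (h : p <:+: l₁ ++ l₂) :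
    p <:+: l₁ ∨ p <:+: l₂ ∨
      ∃ p₁ p₂, p = p₁ ++ p₂ ∧ p₁ <:+ l₁ ∧ p₂ <+: l₂ ∧ p₁ ≠ [] ∧ p₂ ≠ [] := by
  obtain ⟨s, t, hst⟩ := h
  have hst' : s ++ (p ++ t) = l₁ ++ l₂ := by rw [← hst]; simp [List.append_assoc]
  rcases List.append_eq_append_iff.mp hst' with ⟨a', ha1, ha2⟩ | ⟨c', hc1, hc2⟩
  · rcases List.append_eq_append_iff.mp ha2 with ⟨r, hr1, hr2⟩ | ⟨r, hr1, hr2⟩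
    · left
      exact ⟨s, r, by rw [ha1, hr1]; simp [List.append_assoc]⟩
    · rcases eq_or_ne a' [] with rfl | ha
      · right; left
        simp only [List.nil_append] at hr1
        exact List.IsPrefix.isInfix ⟨t, by rw [hr2, hr1]⟩
      · rcases eq_or_ne r [] with rfl | hrne
        · left
          rw [List.append_nil] at hr1
          exact ⟨s, [], by rw [hr1, ← ha1]; simp⟩
        · right; right
          exact ⟨a', r, hr1, ⟨s, ha1.symm⟩, ⟨t, hr2.symm⟩, ha, hrne⟩
  · right; left
    exact ⟨c', t, by rw [hc2]; simp [List.append_assoc]⟩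


/-! ### The sandwich lemma -/

lemma replicate_of_subset {α : Type*} {c : α} {k : ℕ} {l : List α}
    (h : l ⊆ List.replicate k c) : l = List.replicate l.length c :=
  List.eq_replicate_iff.mpr ⟨rfl, fun b hb => List.eq_of_mem_replicate (h hb)⟩

lemma not_infix_replicate (hn : 3 ≤ n) {p : List (Fin n)} (hlen : p.length = n)
    (hnd : p.Nodup) (c : Fin n) (k : ℕ) : ¬ p <:+: List.replicate k c := by
  intro h
  have := replicate_of_subset h.subset
  rw [this, List.nodup_replicate] at hnd
  omega

lemma stepFree_sandwich (hn : 3 ≤ n) {u v : List (Fin n)}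
    (hu : StepFree n (FreeMonoid.ofList u)) (hv : StepFree n (FreeMonoid.ofList v))
    {x y : Fin n} (hx : ∀ (h : u ≠ []), u.getLast h = x) (hy : ∀ (h : v ≠ []), v.head h = y) :
    StepFree n (FreeMonoid.ofList
      (u ++ (List.replicate n x ++ (List.replicate n y ++ v)))) := by
  intro σ hσ
  set p := FreeMonoid.toList (permWord n σ) with hp
  have hlen : p.length = n := length_permWord σ
  have hnd : p.Nodup := nodup_permWord σ
  set X := List.replicate n x with hX
  set Y := List.replicate n y with hY
  have hσ' : p <:+: u ++ (X ++ (Y ++ v)) := hσ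
  rcases infix_split hσ' with h | h | ⟨p₁, p₂, hp12, hs, hpre, hne1, hne2⟩
  · exact hu σ h
  · -- p inside X ++ (Y ++ v)
    rcases infix_split h with h2 | h2 | ⟨q₁, q₂, hq12, hqs, hqpre, hqne1, hqne2⟩
    · exact not_infix_replicate hn hlen hnd x n h2
    · -- p inside Y ++ v
      rcases infix_split h2 with h3 | h3 | ⟨q₁, q₂, hq12, hqs, hqpre, hqne1, hqne2⟩
      · exact not_infix_replicate hn hlen hnd y n h3
      · exact hv σ h3
      · -- q₁ suffix of Y, q₂ prefix of v
        have hq1rep : q₁ = List.replicate q₁.length y := replicate_of_subset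
          (fun b hb => hqs.subset hb)
        have hndq : q₁.Nodup ∧ q₂.Nodup ∧ q₁.Disjoint q₂ := by
          rw [hq12] at hnd
          exact List.nodup_append'.mp hnd
        have hq1le : q₁.length ≤ 1 := by
          have := hndq.1
          rw [hq1rep, List.nodup_replicate] at this
          simpa using this
        have hq1one : q₁.length = 1 := by
          have : q₁.length ≠ 0 := fun h0 => hqne1 (List.length_eq_zero_iff.mp h0)
          omega
        have hyq1 : y ∈ q₁ := by
          rw [hq1rep, hq1one]
          simp
        obtain ⟨t, rfl⟩ := hqpre
        have hvne : q₂ ++ t ≠ [] := by simp [hqne2]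
        have hheadv : (q₂ ++ t).head hvne = y := hy hvne
        have hheadq : q₂.head hqne2 = y := by
          rw [← hheadv, List.head_append_of_ne_nil hqne2]
        have hyq2 : y ∈ q₂ := hheadq ▸ List.head_mem hqne2
        exact hndq.2.2 hyq1 hyq2
    · -- q₁ suffix of X, q₂ prefix of Y ++ v
      have hq1rep : q₁ = List.replicate q₁.length x := replicate_of_subset
        (fun b hb => hqs.subset hb)
      have hndq : q₁.Nodup ∧ q₂.Nodup ∧ q₁.Disjoint q₂ := by
        rw [hq12] at hnd
        exact List.nodup_append'.mp hnd
      have hq1le : q₁.length ≤ 1 := by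
        have := hndq.1
        rw [hq1rep, List.nodup_replicate] at this
        simpa using this
      have hlen12 : q₁.length + q₂.length = n := by
        have := congrArg List.length hq12
        simp at this
        omega
      have hq2len : q₂.length ≤ n := by omega
      have hq2Y : q₂ <+: Y := List.prefix_of_prefix_length_le hqpre
        (List.prefix_append Y v) (by simp [hY, hq2len])
      have hq2rep : q₂ = List.replicate q₂.length y := replicate_of_subset hq2Y.subset
      have : q₂.Nodup := hndq.2.1
      rw [hq2rep, List.nodup_replicate] at this
      have : q₁.length ≠ 0 := fun h0 => hqne1 (List.length_eq_zero_iff.mp h0)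
      omega
  · -- p₁ suffix of u, p₂ prefix of X ++ (Y ++ v)
    have hndq : p₁.Nodup ∧ p₂.Nodup ∧ p₁.Disjoint p₂ := by
      rw [hp12] at hnd
      exact List.nodup_append'.mp hnd
    have hlen12 : p₁.length + p₂.length = n := by
      have := congrArg List.length hp12
      simp at this
      omega
    have hp2len : p₂.length ≤ n := by omega
    have hp2X : p₂ <+: X := List.prefix_of_prefix_length_le hpre
      (List.prefix_append X (Y ++ v)) (by simp [hX, hp2len])
    have hp2rep : p₂ = List.replicate p₂.length x := replicate_of_subset hp2X.subset
    have hp2le : p₂.length ≤ 1 := by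
      have := hndq.2.1
      rw [hp2rep, List.nodup_replicate] at this
      simpa using this
    have hp2one : p₂.length = 1 := by
      have : p₂.length ≠ 0 := fun h0 => hne2 (List.length_eq_zero_iff.mp h0)
      omega
    have hxp2 : x ∈ p₂ := by
      rw [hp2rep, hp2one]
      simp
    obtain ⟨t, rfl⟩ := hs
    have hune : t ++ p₁ ≠ [] := by simp [hne1]
    have hlastu : (t ++ p₁).getLast hune = x := hx hune
    have hlastp : p₁.getLast hne1 = x := by
      rw [← hlastu, List.getLast_append_of_ne_nil _ hne1]
    have hxp1 : x ∈ p₁ := hlastp ▸ List.getLast_mem hne1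
    exact hndq.2.2 hxp1 hxp2

end ZMAux

/-- in `M = S_n(Sym_n)`, the element `z = a_1 ⋯ a_n` is central and
`zM` is a prime (two-sided) ideal of the monoid `M`. -/
theorem zM_prime (n : ℕ) (hn : 3 ≤ n) :
    (∀ s : Msym n, zs n * s = s * zs n) ∧
    (∀ P : Set (Msym n), P = {x | ∃ m, x = zs n * m} →
      (∀ p ∈ P, ∀ s : Msym n, s * p ∈ P ∧ p * s ∈ P) ∧
      (∀ a b : Msym n, a ∉ P → b ∉ P → ∃ s : Msym n, a * s * b ∉ P)) := by
  classical
  refine ⟨ZMAux.zs_central, fun P hP => ⟨?_, ?_⟩⟩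
  · subst hP
    rintro p ⟨m, rfl⟩ s
    constructor
    · exact ⟨s * m, by rw [← mul_assoc, ← ZMAux.zs_central, mul_assoc]⟩
    · exact ⟨m * s, by rw [mul_assoc]⟩
  · subst hP
    intro a b ha hb
    obtain ⟨wa, rfl⟩ := Con.mk'_surjective (c := conGen (symRel n)) a
    obtain ⟨wb, rfl⟩ := Con.mk'_surjective (c := conGen (symRel n)) b
    have hu : ZMAux.StepFree n wa := ZMAux.stepFree_of_not_mem (fun h => ha h)
    have hv : ZMAux.StepFree n wb := ZMAux.stepFree_of_not_mem (fun h => hb h)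
    have hd : 0 < n := by omega
    set u := FreeMonoid.toList wa with hu_def
    set v := FreeMonoid.toList wb with hv_def
    set x : Fin n := if h : u = [] then ⟨0, hd⟩ else u.getLast h with hx_def
    set y : Fin n := if h : v = [] then ⟨0, hd⟩ else v.head h with hy_def
    have hx : ∀ (h : u ≠ []), u.getLast h = x := fun h => by rw [hx_def, dif_neg h]
    have hy : ∀ (h : v ≠ []), v.head h = y := fun h => by rw [hy_def, dif_neg h]
    refine ⟨ZMAux.mk n (FreeMonoid.ofList (List.replicate n x ++ List.replicate n y)), ?_⟩
    intro hmem
    have hmem' : ∃ m, ZMAux.mk n (wa *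
        FreeMonoid.ofList (List.replicate n x ++ List.replicate n y) * wb) = zs n * m := by
      obtain ⟨m, hm⟩ := hmem
      exact ⟨m, by rw [map_mul, map_mul]; exact hm⟩
    have hword : wa * FreeMonoid.ofList (List.replicate n x ++ List.replicate n y) * wb
        = FreeMonoid.ofList (u ++ (List.replicate n x ++ (List.replicate n y ++ v))) := by
      apply FreeMonoid.toList.injective
      simp [FreeMonoid.toList_mul, List.append_assoc, hu_def, hv_def]
    rw [hword] at hmem'
    have hsf : ZMAux.StepFree n (FreeMonoid.ofList
        (u ++ (List.replicate n x ++ (List.replicate n y ++ v)))) :=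
      ZMAux.stepFree_sandwich hn hu hv hx hy
    exact ZMAux.not_mem_of_stepFree hsf hmem'
end

section
/- Let K be a field, n ≥ 3, and let M = S_n(Sym_n) be the monoid presented by generators a_1, …, a_n and relations a_1 a_2 ⋯ a_n = a_{σ(1)} ⋯ a_{σ(n)} for all σ ∈ Sym_n. Let z = a_1 ⋯ a_n, let C be the two-sided ideal of the monoid algebra K[M] generated by all commutators a_i a_j − a_j a_i (i ≠ j), and let K[Mz] be the K-linear span of the ideal Mz in K[M]. Then K[Mz] ∩ C = 0; equivalently, K[M] is a subdirect product of K[M]/C and K[M]/K[Mz], i.e. the natural ring homomorphism K[M] → (K[M]/C) × (K[M]/K[Mz]) is injective. Moreover, K[M]/C is isomorphic as a K-algebra to the commutative polynomial algebra K[x_1, …, x_n]. -/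
namespace Sd
variable {n : ℕ}

/-- `mk` as a monoid hom. -/
def mk (n : ℕ) : FreeMonoid (Fin n) →* Msym n := (conGen (symRel n)).mk'

/-- image of a list -/
def mkl (w : List (Fin n)) : Msym n := mk n (FreeMonoid.ofList w)

lemma mkl_append (u v : List (Fin n)) : mkl (u ++ v) = mkl u * mkl v := by
  unfold mkl
  rw [← map_mul]
  rfl

lemma mkl_cons (a : Fin n) (u : List (Fin n)) : mkl (a :: u) = mgen a * mkl u := by
  have : a :: u = [a] ++ u := rfl
  rw [this, mkl_append]; rfl

lemma mkl_nil : mkl ([] : List (Fin n)) = 1 := rfl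

lemma mkl_singleton (a : Fin n) : mkl [a] = mgen a := rfl

lemma ofList_map_of (w : List (Fin n)) :
    (w.map fun i => FreeMonoid.of i).prod = FreeMonoid.ofList w := by
  induction w with
  | nil => rfl
  | cons a t ih => simp only [List.map_cons, List.prod_cons, ih]; rfl

lemma permWord_eq (σ : Equiv.Perm (Fin n)) :
    permWord n σ = FreeMonoid.ofList ((List.finRange n).map σ) := by
  unfold permWord
  rw [← ofList_map_of, List.map_map]
  rfl

lemma mk_permWord_eq (σ : Equiv.Perm (Fin n)) : mk n (permWord n σ) = mk n (permWord n 1) := by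
  refine ((conGen (symRel n)).eq).2 ?_
  exact (ConGen.Rel.of _ _ ⟨rfl, σ, rfl⟩).symm

lemma zs_eq : zs n = mkl (List.finRange n) := by
  unfold zs mkl
  rw [← ofList_map_of, map_list_prod, List.map_map]
  rfl

/-- Lemma A -/
lemma mkl_perm_finRange (w : List (Fin n)) (h : w.Perm (List.finRange n)) : mkl w = zs n := by
  have hlen : w.length = n := by simpa using h.length_eq
  have hnd : w.Nodup := h.nodup_iff.2 (List.nodup_finRange n)
  -- build σ
  have hinj : Function.Injective (fun i : Fin n => w.get (Fin.cast hlen.symm i)) := by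
    intro a b hab
    have := (List.nodup_iff_injective_get.1 hnd) hab
    simpa [Fin.ext_iff] using this
  have hbij := Finite.injective_iff_bijective.1 hinj
  let σ : Equiv.Perm (Fin n) := Equiv.ofBijective _ hbij
  have hw : (List.finRange n).map σ = w := by
    refine List.ext_get (by simpa using hlen.symm) ?_
    intro i h1 h2
    simp [σ, Equiv.ofBijective]
  have h1 : mkl w = mk n (permWord n σ) := by rw [permWord_eq, hw]; rfl
  have h2 : zs n = mk n (permWord n 1) := by
    rw [zs_eq, permWord_eq]
    show mk n (FreeMonoid.ofList _) = _
    congr 1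
    simp
  rw [h1, mk_permWord_eq, ← h2]

lemma mkl_surjective : Function.Surjective (mkl : List (Fin n) → Msym n) := by
  intro m
  obtain ⟨x, hx⟩ := Con.mk'_surjective (c := conGen (symRel n)) m
  exact ⟨FreeMonoid.toList x, by simp only [mkl, mk, FreeMonoid.ofList_toList]; exact hx⟩

lemma perm_cons_erase' (k : Fin n) : (k :: (List.finRange n).erase k).Perm (List.finRange n) :=
  (List.perm_cons_erase (List.mem_finRange k)).symm

lemma zs_mul_gen (k : Fin n) : zs n * mgen k = mgen k * zs n := by
  set r := (List.finRange n).erase k with hr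
  have h1 : mkl (k :: r) = zs n := mkl_perm_finRange _ (perm_cons_erase' k)
  have h2 : mkl (r ++ [k]) = zs n :=
    mkl_perm_finRange _ ((List.perm_append_singleton k r).trans (perm_cons_erase' k))
  calc zs n * mgen k = mkl (k :: r) * mkl [k] := by rw [h1, mkl_singleton]
    _ = mkl ((k :: r) ++ [k]) := (mkl_append _ _).symm
    _ = mkl (k :: (r ++ [k])) := rfl
    _ = mgen k * mkl (r ++ [k]) := mkl_cons _ _
    _ = mgen k * zs n := by rw [h2]

lemma zs_central (m : Msym n) : zs n * m = m * zs n := by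
  obtain ⟨w, rfl⟩ := mkl_surjective m
  induction w with
  | nil => rw [mkl_nil, mul_one, one_mul]
  | cons a t ih =>
      rw [mkl_cons, ← mul_assoc, zs_mul_gen, mul_assoc, ih, ← mul_assoc]

lemma swap_zs (i j : Fin n) : mgen i * (mgen j * zs n) = mgen j * (mgen i * zs n) := by
  rcases eq_or_ne i j with rfl | hij
  · rfl
  set w := ((List.finRange n).erase i).erase j with hw
  have hperm : (i :: j :: w).Perm (List.finRange n) := by
    have hj : j ∈ (List.finRange n).erase i :=
      (List.mem_erase_of_ne hij.symm).2 (List.mem_finRange j)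
    have h2 : (j :: w).Perm ((List.finRange n).erase i) := (List.perm_cons_erase hj).symm
    exact (h2.cons i).trans (perm_cons_erase' i)
  have h1 : mkl (i :: j :: w) = zs n := mkl_perm_finRange _ hperm
  have h2 : mkl (j :: i :: w) = zs n :=
    mkl_perm_finRange _ ((List.Perm.swap i j w).trans hperm)
  have h3 : mkl (w ++ [i, j]) = zs n := by
    refine mkl_perm_finRange _ (List.Perm.trans ?_ hperm)
    exact List.perm_append_comm
  have e1 : mgen i * (mgen j * zs n) = mkl ([i, j] ++ (w ++ [i, j])) := by
    rw [mkl_append, ← h3, mkl_cons, mkl_singleton, mul_assoc]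
  have e2 : mkl ([i, j] ++ (w ++ [i, j])) = mkl (i :: j :: w) * mkl [i, j] := by
    rw [← mkl_append]; congr 1
  have e3 : mkl (j :: i :: w) * mkl [i, j] = mkl ([j, i] ++ (w ++ [i, j])) := by
    rw [← mkl_append]; congr 1
  have e4 : mkl ([j, i] ++ (w ++ [i, j])) = mgen j * (mgen i * zs n) := by
    rw [mkl_append, h3, mkl_cons, mkl_singleton, mul_assoc]
  calc mgen i * (mgen j * zs n) = mkl (i :: j :: w) * mkl [i, j] := e1.trans e2
    _ = zs n * mkl [i, j] := by rw [h1]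
    _ = mkl (j :: i :: w) * mkl [i, j] := by rw [h2]
    _ = mgen j * (mgen i * zs n) := e3.trans e4

lemma wz_perm {u v : List (Fin n)} (h : u.Perm v) : mkl u * zs n = mkl v * zs n := by
  induction h with
  | nil => rfl
  | cons a _ ih => rw [mkl_cons, mkl_cons, mul_assoc, mul_assoc, ih]
  | swap a b l =>
      calc mkl (b :: a :: l) * zs n
          = mgen b * (mgen a * (mkl l * zs n)) := by rw [mkl_cons, mkl_cons]; simp [mul_assoc]
        _ = mgen b * (mgen a * (zs n * mkl l)) := by rw [zs_central]
        _ = mgen b * (mgen a * zs n) * mkl l := by simp [mul_assoc]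
        _ = mgen a * (mgen b * zs n) * mkl l := by rw [swap_zs b a]
        _ = mgen a * (mgen b * (zs n * mkl l)) := by simp [mul_assoc]
        _ = mgen a * (mgen b * (mkl l * zs n)) := by rw [zs_central]
        _ = mkl (a :: b :: l) * zs n := by rw [mkl_cons, mkl_cons]; simp [mul_assoc]
  | trans _ _ ih1 ih2 => rw [ih1, ih2]


/-! ### Abelianization -/

/-- free monoid to multiplicative finsupp -/
noncomputable def fm (n : ℕ) : FreeMonoid (Fin n) →* Multiplicative (Fin n →₀ ℕ) :=
  FreeMonoid.lift fun i => Multiplicative.ofAdd (Finsupp.single i 1)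

noncomputable def content (w : List (Fin n)) : Fin n →₀ ℕ := (w.map fun i => Finsupp.single i 1).sum

lemma fm_ofList (w : List (Fin n)) :
    fm n (FreeMonoid.ofList w) = Multiplicative.ofAdd (content w) := by
  induction w with
  | nil => rfl
  | cons a t ih =>
      have : FreeMonoid.ofList (a :: t) = FreeMonoid.of a * FreeMonoid.ofList t := rfl
      rw [this, map_mul, ih, fm, FreeMonoid.lift_eval_of]
      rfl

lemma perm_map_finRange (σ : Equiv.Perm (Fin n)) :
    ((List.finRange n).map σ).Perm (List.finRange n) := by
  refine List.perm_of_nodup_nodup_toFinset_eq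
    ((List.nodup_finRange n).map σ.injective) (List.nodup_finRange n) ?_
  ext x
  simp only [List.mem_toFinset, List.mem_map, List.mem_finRange, true_iff, iff_true]
  exact ⟨σ.symm x, by simp⟩

lemma content_perm {u v : List (Fin n)} (h : u.Perm v) : content u = content v := by
  unfold content
  exact List.Perm.sum_eq (h.map _)

lemma fm_rel : ∀ x y, symRel n x y → fm n x = fm n y := by
  rintro x y ⟨rfl, σ, rfl⟩
  rw [permWord_eq, permWord_eq, fm_ofList, fm_ofList]
  congr 1
  refine content_perm ?_
  refine List.Perm.trans ?_ (perm_map_finRange σ).symm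
  simp

/-- abelianization of Msym -/
noncomputable def em (n : ℕ) : Msym n →* Multiplicative (Fin n →₀ ℕ) :=
  Con.lift _ (fm n) (Con.conGen_le.2 fun x y h => (Con.ker_rel _).2 (fm_rel x y h))

lemma em_mkl (w : List (Fin n)) : em n (mkl w) = Multiplicative.ofAdd (content w) := by
  rw [em, mkl, mk]
  exact (Con.lift_mk' _ _).trans (fm_ofList w)

lemma content_toFinsupp (w : List (Fin n)) : content w = Multiset.toFinsupp (↑w : Multiset (Fin n)) := by
  induction w with
  | nil => rfl
  | cons a t ih =>
      have : (↑(a :: t) : Multiset (Fin n)) = {a} + ↑t := by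
        rw [← Multiset.cons_coe, Multiset.singleton_add]
      rw [this, map_add, Multiset.toFinsupp_singleton, ← ih]
      show content (a :: t) = _
      unfold content
      rw [List.map_cons, List.sum_cons]

lemma perm_of_content_eq {u v : List (Fin n)} (h : content u = content v) : u.Perm v := by
  rw [content_toFinsupp, content_toFinsupp] at h
  exact Multiset.coe_eq_coe.1 (Multiset.toFinsupp.injective h)

lemma em_mgen (i : Fin n) : em n (mgen i) = Multiplicative.ofAdd (Finsupp.single i 1) := by
  have : mgen i = mkl [i] := rfl
  rw [this, em_mkl]
  congr 1
  unfold content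
  simp

/-- `em` is injective on `M·z`. -/
lemma emz_inj {m₁ m₂ : Msym n} (h : em n (m₁ * zs n) = em n (m₂ * zs n)) :
    m₁ * zs n = m₂ * zs n := by
  obtain ⟨u, rfl⟩ := mkl_surjective m₁
  obtain ⟨v, rfl⟩ := mkl_surjective m₂
  rw [map_mul, map_mul] at h
  have h2 : em n (mkl u) = em n (mkl v) := mul_right_cancel h
  rw [em_mkl, em_mkl] at h2
  exact wz_perm (perm_of_content_eq (by exact_mod_cast h2))


/-! ### The algebra map to polynomials -/

section Alg
variable (K : Type*) [Field K] (n : ℕ)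

noncomputable def bmap : Msym n →* MvPolynomial (Fin n) K where
  toFun m := MvPolynomial.monomial (Multiplicative.toAdd (em n m)) 1
  map_one' := by simp
  map_mul' x y := by
    have h : Multiplicative.toAdd (em n (x * y))
        = Multiplicative.toAdd (em n x) + Multiplicative.toAdd (em n y) := by
      rw [map_mul]; rfl
    show MvPolynomial.monomial (Multiplicative.toAdd (em n (x * y))) (1:K) = _
    rw [h, MvPolynomial.monomial_mul, one_mul]

@[simp] lemma bmap_apply (m : Msym n) :
    bmap K n m = MvPolynomial.monomial (Multiplicative.toAdd (em n m)) 1 := rfl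

noncomputable def phi : MonoidAlgebra K (Msym n) →ₐ[K] MvPolynomial (Fin n) K :=
  MonoidAlgebra.lift K _ (Msym n) (bmap K n)

lemma phi_single (m : Msym n) (k : K) :
    phi K n (MonoidAlgebra.single m k)
      = MvPolynomial.monomial (Multiplicative.toAdd (em n m)) k := by
  rw [phi, MonoidAlgebra.lift_single, bmap_apply, MvPolynomial.smul_monomial, smul_eq_mul, mul_one]

variable {K n}

lemma coeff_phi (v : MonoidAlgebra K (Msym n)) (t : Fin n →₀ ℕ) :
    MvPolynomial.coeff t (phi K n v) =
      ∑ m ∈ v.coeff.support.filter (fun m => Multiplicative.toAdd (em n m) = t), v.coeff m := by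
  rw [phi, MonoidAlgebra.lift_apply, Finsupp.sum, MvPolynomial.coeff_sum, Finset.sum_filter]
  refine Finset.sum_congr rfl fun m _ => ?_
  rw [bmap_apply, MvPolynomial.smul_monomial, smul_eq_mul, mul_one, MvPolynomial.coeff_monomial]

lemma c_single_perm (c : RingCon (MonoidAlgebra K (Msym n)))
    (hgen : ∀ i j : Fin n, i ≠ j →
      c (MonoidAlgebra.single (mgen i) 1 * MonoidAlgebra.single (mgen j) 1)
        (MonoidAlgebra.single (mgen j) 1 * MonoidAlgebra.single (mgen i) 1))
    {u v : List (Fin n)} (h : u.Perm v) :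
    c (MonoidAlgebra.single (mkl u) (1:K)) (MonoidAlgebra.single (mkl v) 1) := by
  induction h with
  | nil => exact c.refl _
  | cons a _ ih =>
      have e : ∀ w : List (Fin n), MonoidAlgebra.single (mkl (a :: w)) (1:K)
          = MonoidAlgebra.single (mgen a) 1 * MonoidAlgebra.single (mkl w) 1 := fun w => by
        rw [MonoidAlgebra.single_mul_single, one_mul, mkl_cons]
      rw [e, e]; exact c.mul (c.refl _) ih
  | swap a b l =>
      rcases eq_or_ne a b with rfl | hab
      · exact c.refl _
      have e : ∀ x y : Fin n, ∀ w : List (Fin n), MonoidAlgebra.single (mkl (x :: y :: w)) (1:K)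
          = (MonoidAlgebra.single (mgen x) 1 * MonoidAlgebra.single (mgen y) 1)
              * MonoidAlgebra.single (mkl w) 1 := fun x y w => by
        rw [MonoidAlgebra.single_mul_single, MonoidAlgebra.single_mul_single, one_mul, one_mul,
          mkl_cons, mkl_cons, mul_assoc]
      rw [e, e]
      exact c.mul (hgen b a hab.symm) (c.refl _)
  | trans _ _ ih1 ih2 => exact c.trans ih1 ih2

/-- Key spanning lemma: anything killed by `phi` is congruent to `0` mod commutators. -/
lemma czero_of_phi_zero (c : RingCon (MonoidAlgebra K (Msym n)))
    (hgen : ∀ i j : Fin n, i ≠ j →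
      c (MonoidAlgebra.single (mgen i) 1 * MonoidAlgebra.single (mgen j) 1)
        (MonoidAlgebra.single (mgen j) 1 * MonoidAlgebra.single (mgen i) 1)) :
    ∀ (N : ℕ) (v : MonoidAlgebra K (Msym n)), v.coeff.support.card ≤ N → phi K n v = 0 → c v 0 := by
  intro N
  induction N with
  | zero =>
      intro v hcard _
      have : v = 0 := by
        rwa [Nat.le_zero, Finset.card_eq_zero, Finsupp.support_eq_empty, MonoidAlgebra.coeff_eq_zero] at hcard
      exact this ▸ c.refl 0
  | succ N ih =>
      intro v hcard hphi
      classical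
      rcases eq_or_ne v 0 with rfl | hv
      · exact c.refl 0
      obtain ⟨m₀, hm₀⟩ := Finsupp.support_nonempty_iff.2 (MonoidAlgebra.coeff_eq_zero.not.2 hv)
      set t₀ := Multiplicative.toAdd (em n m₀) with ht₀
      have hsum : ∑ m ∈ v.coeff.support.filter (fun m => Multiplicative.toAdd (em n m) = t₀), v.coeff m = 0 := by
        rw [← coeff_phi, hphi, MvPolynomial.coeff_zero]
      have hm₀T : m₀ ∈ v.coeff.support.filter (fun m => Multiplicative.toAdd (em n m) = t₀) :=
        Finset.mem_filter.2 ⟨hm₀, rfl⟩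
      have hex : ∃ m₁ ∈ v.coeff.support.filter (fun m => Multiplicative.toAdd (em n m) = t₀), m₁ ≠ m₀ := by
        by_contra hcon
        push_neg at hcon
        have hT : v.coeff.support.filter (fun m => Multiplicative.toAdd (em n m) = t₀) = {m₀} :=
          Finset.eq_singleton_iff_unique_mem.2 ⟨hm₀T, hcon⟩
        rw [hT, Finset.sum_singleton] at hsum
        exact (Finsupp.mem_support_iff.1 hm₀) hsum
      obtain ⟨m₁, hm₁T, hne⟩ := hex
      have hm₁ : m₁ ∈ v.coeff.support := (Finset.mem_filter.1 hm₁T).1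
      have hem : em n m₁ = em n m₀ :=
        Multiplicative.toAdd.injective ((Finset.mem_filter.1 hm₁T).2)
      -- c relates the two singles
      obtain ⟨u₀, hu₀⟩ := mkl_surjective m₀
      obtain ⟨u₁, hu₁⟩ := mkl_surjective m₁
      have hperm : u₀.Perm u₁ := by
        refine perm_of_content_eq ?_
        have : em n (mkl u₀) = em n (mkl u₁) := by rw [hu₀, hu₁, hem]
        rw [em_mkl, em_mkl] at this
        exact_mod_cast this
      have hc01 : c (MonoidAlgebra.single m₀ (v.coeff m₀)) (MonoidAlgebra.single m₁ (v.coeff m₀)) := by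
        have h1 : c (MonoidAlgebra.single m₀ (1:K)) (MonoidAlgebra.single m₁ 1) := by
          rw [← hu₀, ← hu₁]; exact c_single_perm c hgen hperm
        have h2 : ∀ m : Msym n, MonoidAlgebra.single (1 : Msym n) (v.coeff m₀)
            * MonoidAlgebra.single m (1:K) = MonoidAlgebra.single m (v.coeff m₀) := fun m => by
          rw [MonoidAlgebra.single_mul_single, one_mul, mul_one]
        have h3 := c.mul (c.refl (MonoidAlgebra.single (1 : Msym n) (v.coeff m₀))) h1
        rwa [h2, h2] at h3
      set w : MonoidAlgebra K (Msym n) :=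
        MonoidAlgebra.single m₀ (v.coeff m₀) - MonoidAlgebra.single m₁ (v.coeff m₀) with hwdef
      have hcw : c w 0 := by
        have := c.sub hc01 (c.refl (MonoidAlgebra.single m₁ (v.coeff m₀)))
        rwa [sub_self] at this
      have hphiw : phi K n w = 0 := by
        rw [hwdef, map_sub, phi_single, phi_single, hem, sub_self]
      have hphiv' : phi K n (v - w) = 0 := by rw [map_sub, hphi, hphiw, sub_zero]
      have hsupp : (v - w).coeff.support ⊆ v.coeff.support.erase m₀ := by
        intro m hm
        have hvm : (v - w).coeff m ≠ 0 := Finsupp.mem_support_iff.1 hm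
        rw [Finset.mem_erase]
        constructor
        · rintro rfl
          apply hvm
          simp only [hwdef, MonoidAlgebra.coeff_sub, MonoidAlgebra.coeff_single, Finsupp.sub_apply]
          rw [Finsupp.single_eq_same, Finsupp.single_eq_of_ne' hne]
          ring
        · by_contra hmv
          apply hvm
          have h0 : v.coeff m = 0 := Finsupp.notMem_support_iff.1 hmv
          have hmm1 : m ≠ m₁ := fun h => hmv (h ▸ hm₁)
          have hmm0 : m ≠ m₀ := fun h => hmv (h ▸ hm₀)
          simp only [hwdef, MonoidAlgebra.coeff_sub, MonoidAlgebra.coeff_single, Finsupp.sub_apply]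
          rw [h0,
            Finsupp.single_eq_of_ne' (Ne.symm hmm0), Finsupp.single_eq_of_ne' (Ne.symm hmm1)]
          ring
      have hcard' : (v - w).coeff.support.card ≤ N := by
        have h1 := Finset.card_le_card hsupp
        rw [Finset.card_erase_of_mem hm₀] at h1
        omega
      have hcv' : c (v - w) 0 := ih (v - w) hcard' hphiv'
      have := c.add hcv' hcw
      rwa [sub_add_cancel, add_zero] at this


/-! ### The ideal Mz -/

section Ideal
variable {K : Type*} [Field K] {n : ℕ}

def Zset (n : ℕ) : Set (Msym n) := {x | ∃ m, x = m * zs n}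

lemma Zset_mul_left (a : Msym n) {m : Msym n} (hm : m ∈ Zset n) : a * m ∈ Zset n := by
  obtain ⟨m', rfl⟩ := hm
  exact ⟨a * m', (mul_assoc a m' (zs n)).symm⟩

lemma Zset_mul_right {m : Msym n} (hm : m ∈ Zset n) (a : Msym n) : m * a ∈ Zset n := by
  obtain ⟨m', rfl⟩ := hm
  refine ⟨m' * a, ?_⟩
  rw [mul_assoc, zs_central a, ← mul_assoc]

lemma mem_span_Z_iff (x : MonoidAlgebra K (Msym n)) :
    x ∈ Submodule.span K (MonoidAlgebra.of K (Msym n) '' Zset n) ↔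
      ∀ m ∈ x.coeff.support, m ∈ Zset n := by
  classical
  constructor
  · intro h
    induction h using Submodule.span_induction with
    | mem y hy =>
        obtain ⟨m0, hm0, rfl⟩ := hy
        intro m hm
        rw [MonoidAlgebra.of_apply, MonoidAlgebra.coeff_single] at hm
        have h1 := Finsupp.support_single_subset hm
        rw [Finset.mem_singleton] at h1
        exact h1 ▸ hm0
    | zero => simp
    | add x y _ _ hx hy =>
        intro m hm
        rw [MonoidAlgebra.coeff_add] at hm
        rcases Finset.mem_union.1 (Finsupp.support_add hm) with h | h
        exacts [hx _ h, hy _ h]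
    | smul k x _ hx => exact fun m hm => hx m (Finsupp.support_smul (by rwa [MonoidAlgebra.coeff_smul] at hm))
  · intro h
    have hx : x = x.coeff.sum MonoidAlgebra.single := (MonoidAlgebra.sum_coeff_single x).symm
    rw [hx]
    refine Submodule.sum_mem _ fun m hm => ?_
    have h1 : (MonoidAlgebra.single m (x.coeff m) : MonoidAlgebra K (Msym n))
        = (x.coeff m) • MonoidAlgebra.of K (Msym n) m := by
      rw [MonoidAlgebra.of_apply, MonoidAlgebra.smul_single', mul_one]
    rw [h1]
    exact Submodule.smul_mem _ _ (Submodule.subset_span ⟨m, h m hm, rfl⟩)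

end Ideal

section Surj
variable (K : Type*) [Field K] (n : ℕ)

lemma phi_surjective : Function.Surjective (phi K n) := by
  have htop : ⊤ ≤ (phi K n).range := by
    rw [← MvPolynomial.adjoin_range_X]
    refine Algebra.adjoin_le ?_
    rintro _ ⟨i, rfl⟩
    rw [SetLike.mem_coe, AlgHom.mem_range]
    refine ⟨MonoidAlgebra.single (mgen i) 1, ?_⟩
    rw [phi_single, em_mgen]
    rfl
  intro p
  obtain ⟨a, ha⟩ := htop (Algebra.mem_top (x := p))
  exact ⟨a, ha⟩

end Surj

end Alg

end Sd

open Sd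

/-- let `C` be the two-sided ideal of `K[M]` generated by the commutators
`a_i a_j - a_j a_i` (`i ≠ j`); as a congruence this is the ring congruence `c` generated by
`a_i a_j ∼ a_j a_i`, whose zero class `{x | c x 0}` is exactly `C`.  Let `K[Mz]` be the
`K`-linear span of `Mz` and `d` the corresponding ring congruence.  Then `K[Mz] ∩ C = 0`;
equivalently the natural ring homomorphism `K[M] → K[M]/C × K[M]/K[Mz]` is injective.
Moreover `K[M]/C` is isomorphic as a `K`-algebra to the polynomial algebra in `n` variables. -/
theorem subdirect_product (K : Type*) [Field K] (n : ℕ) (hn : 3 ≤ n)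
    (KMz : Submodule K (MonoidAlgebra K (Msym n)))
    (hKMz : KMz = Submodule.span K (MonoidAlgebra.of K (Msym n) '' {x | ∃ m, x = m * zs n}))
    (c : RingCon (MonoidAlgebra K (Msym n)))
    (hc : c = ringConGen (fun x y => ∃ i j : Fin n, i ≠ j ∧
      x = MonoidAlgebra.of K (Msym n) (mgen i) * MonoidAlgebra.of K (Msym n) (mgen j) ∧
      y = MonoidAlgebra.of K (Msym n) (mgen j) * MonoidAlgebra.of K (Msym n) (mgen i)))
    (d : RingCon (MonoidAlgebra K (Msym n)))
    (hd : d = ringConGen (fun x y => x - y ∈ KMz)) :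
    (∀ x : MonoidAlgebra K (Msym n), x ∈ KMz → c x 0 → x = 0) ∧
    Function.Injective (fun x : MonoidAlgebra K (Msym n) => (c.mk' x, d.mk' x)) ∧
    (∃ e : c.Quotient ≃+* MvPolynomial (Fin n) K,
      ∀ a : K, e (c.mk' (algebraMap K (MonoidAlgebra K (Msym n)) a)) = MvPolynomial.C a) := by
  classical
  have hgen : ∀ i j : Fin n, i ≠ j →
      c (MonoidAlgebra.single (mgen i) 1 * MonoidAlgebra.single (mgen j) 1)
        (MonoidAlgebra.single (mgen j) 1 * MonoidAlgebra.single (mgen i) 1) := by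
    intro i j hij
    rw [hc]
    exact RingConGen.Rel.of _ _ ⟨i, j, hij,
      by rw [MonoidAlgebra.of_apply, MonoidAlgebra.of_apply],
      by rw [MonoidAlgebra.of_apply, MonoidAlgebra.of_apply]⟩
  let kc : RingCon (MonoidAlgebra K (Msym n)) :=
    { r := fun a b => phi K n a = phi K n b
      iseqv := ⟨fun _ => rfl, Eq.symm, Eq.trans⟩
      add' := fun {a b a' b'} h1 h2 => by
        show phi K n (a + a') = phi K n (b + b')
        rw [map_add, map_add, show phi K n a = phi K n b from h1,
          show phi K n a' = phi K n b' from h2]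
      mul' := fun {a b a' b'} h1 h2 => by
        show phi K n (a * a') = phi K n (b * b')
        rw [map_mul, map_mul, show phi K n a = phi K n b from h1,
          show phi K n a' = phi K n b' from h2] }
  have hcker : ∀ x y, c x y → phi K n x = phi K n y := by
    intro x y hxy
    rw [hc] at hxy
    refine (RingCon.ringConGen_le (c := kc)).2 ?_ hxy
    rintro a b ⟨i, j, hij, rfl, rfl⟩
    show phi K n _ = phi K n _
    rw [map_mul, map_mul, mul_comm]
  have part1 : ∀ x : MonoidAlgebra K (Msym n), x ∈ KMz → c x 0 → x = 0 := by
    intro x hx hc0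
    have hφ : phi K n x = 0 := by
      have := hcker x 0 hc0; rwa [map_zero] at this
    rw [hKMz] at hx
    have hsupp : ∀ m ∈ x.coeff.support, m ∈ Zset n := (mem_span_Z_iff x).1 hx
    by_contra hx0
    obtain ⟨m₀, hm₀⟩ := Finsupp.support_nonempty_iff.2 (MonoidAlgebra.coeff_eq_zero.not.2 hx0)
    have hfilter : x.coeff.support.filter
        (fun m' => Multiplicative.toAdd (em n m') = Multiplicative.toAdd (em n m₀)) = {m₀} := by
      refine Finset.eq_singleton_iff_unique_mem.2 ⟨Finset.mem_filter.2 ⟨hm₀, rfl⟩, ?_⟩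
      intro m' hm'
      have h1 : em n m' = em n m₀ :=
        Multiplicative.toAdd.injective (Finset.mem_filter.1 hm').2
      obtain ⟨a, ha⟩ := hsupp m' (Finset.mem_filter.1 hm').1
      obtain ⟨b, hb⟩ := hsupp m₀ hm₀
      rw [ha, hb] at h1 ⊢
      exact emz_inj h1
    have hco := coeff_phi x (Multiplicative.toAdd (em n m₀))
    rw [hφ, MvPolynomial.coeff_zero, hfilter, Finset.sum_singleton] at hco
    exact (Finsupp.mem_support_iff.1 hm₀) hco.symm
  have hKMzmem : ∀ x : MonoidAlgebra K (Msym n),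
      x ∈ KMz ↔ ∀ m ∈ x.coeff.support, m ∈ Zset n := by
    intro x; rw [hKMz]; exact mem_span_Z_iff x
  have hmulL : ∀ a x : MonoidAlgebra K (Msym n), x ∈ KMz → a * x ∈ KMz := by
    intro a x hx
    rw [hKMzmem] at hx ⊢
    intro m hm
    obtain ⟨g1, _, g2, hg2, rfl⟩ := Finset.mem_mul.1 (MonoidAlgebra.support_coeff_mul_subset a x hm)
    exact Zset_mul_left g1 (hx g2 hg2)
  have hmulR : ∀ a x : MonoidAlgebra K (Msym n), x ∈ KMz → x * a ∈ KMz := by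
    intro a x hx
    rw [hKMzmem] at hx ⊢
    intro m hm
    obtain ⟨g1, hg1, g2, _, rfl⟩ := Finset.mem_mul.1 (MonoidAlgebra.support_coeff_mul_subset x a hm)
    exact Zset_mul_right (hx g1 hg1) g2
  let D : RingCon (MonoidAlgebra K (Msym n)) :=
    { r := fun a b => a - b ∈ KMz
      iseqv := ⟨fun a => by rw [sub_self]; exact zero_mem _,
        fun h => by have := KMz.neg_mem h; rwa [neg_sub] at this,
        fun h1 h2 => by have := add_mem h1 h2; rwa [sub_add_sub_cancel] at this⟩
      add' := fun h1 h2 => by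
        have := add_mem h1 h2; rwa [sub_add_sub_comm] at this
      mul' := fun {w x y z} h1 h2 => by
        have hh : w * y - x * z = w * (y - z) + (w - x) * z := by noncomm_ring
        show w * y - x * z ∈ KMz
        rw [hh]
        exact add_mem (hmulL w _ h2) (hmulR z _ h1) }
  have hd' : ∀ x y, d x y → x - y ∈ KMz := by
    intro x y hxy
    rw [hd] at hxy
    exact (RingCon.ringConGen_le (c := D)).2 (fun a b h => h) hxy
  refine ⟨part1, ?_, ?_⟩
  · intro x y hxy
    rw [Prod.mk.injEq] at hxy
    have h1 : c x y := by rw [← c.eq]; exact hxy.1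
    have h2 : x - y ∈ KMz := hd' x y (by rw [← d.eq]; exact hxy.2)
    have h3 : c (x - y) 0 := by
      have := c.sub h1 (c.refl y); rwa [sub_self] at this
    exact sub_eq_zero.mp (part1 (x - y) h2 h3)
  · have hker2 : ∀ x y, phi K n x = phi K n y → c x y := by
      intro x y h
      have h0 : phi K n (x - y) = 0 := by rw [map_sub, h, sub_self]
      have h5 := czero_of_phi_zero c hgen (x - y).coeff.support.card (x - y) le_rfl h0
      have h4 := c.add h5 (c.refl y)
      rwa [sub_add_cancel, zero_add] at h4
    let E : c.Quotient →+* MvPolynomial (Fin n) K :=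
      { toFun := Quotient.lift (phi K n : MonoidAlgebra K (Msym n) → MvPolynomial (Fin n) K)
          (fun a b hab => hcker a b hab)
        map_one' := map_one (phi K n)
        map_mul' := by rintro ⟨x⟩ ⟨y⟩; exact map_mul (phi K n) x y
        map_zero' := map_zero (phi K n)
        map_add' := by rintro ⟨x⟩ ⟨y⟩; exact map_add (phi K n) x y }
    refine ⟨RingEquiv.ofBijective E ⟨?_, ?_⟩, ?_⟩
    · rintro ⟨x⟩ ⟨y⟩ h
      exact (c.eq).mpr (hker2 x y h)
    · intro p
      obtain ⟨a, ha⟩ := phi_surjective K n p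
      exact ⟨c.mk' a, ha⟩
    · intro a
      show phi K n (algebraMap K (MonoidAlgebra K (Msym n)) a) = MvPolynomial.C a
      rw [AlgHom.commutes, MvPolynomial.algebraMap_eq]
end

section
/- Let n ≥ 3, let H_0 be the cyclic subgroup of Sym_n generated by the n-cycle (1,2,…,n), and let H be a subgroup of Sym_n containing H_0. Let G_n(H) be the group presented by generators a_1, …, a_n and relations a_1 a_2 ⋯ a_n = a_{τ(1)} a_{τ(2)} ⋯ a_{τ(n)} for all τ ∈ H. Then G_n(H) is isomorphic to F × ℤ, where F is the group presented by generators x_1, …, x_n and relations x_1 x_2 ⋯ x_n = 1 and x_{τ(1)} x_{τ(2)} ⋯ x_{τ(n)} = 1 for all τ ∈ H. -/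
/-- The word `a_{σ(1)} a_{σ(2)} ⋯ a_{σ(n)}` in the free group on `n` generators. -/
def permGWord (n : ℕ) (σ : Equiv.Perm (Fin n)) : FreeGroup (Fin n) :=
  ((List.finRange n).map fun i => FreeGroup.of (σ i)).prod

namespace GnHAux

open PresentedGroup Multiplicative

theorem mk_permGWord {n : ℕ} (rels : Set (FreeGroup (Fin n))) (σ : Equiv.Perm (Fin n)) :
    PresentedGroup.mk rels (permGWord n σ)
      = ((List.finRange n).map fun i => (PresentedGroup.of (σ i) : PresentedGroup rels)).prod := by
  rw [permGWord, map_list_prod, List.map_map]; rfl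

theorem lift_permGWord {n : ℕ} {G : Type*} [Group G] (f : Fin n → G) (σ : Equiv.Perm (Fin n)) :
    FreeGroup.lift f (permGWord n σ) = ((List.finRange n).map fun i => f (σ i)).prod := by
  rw [permGWord, map_list_prod, List.map_map]; simp [Function.comp_def]

theorem rot_list (m : ℕ) :
    (List.finRange (m + 1)).map (finRotate (m + 1))
      = ((List.finRange m).map Fin.succ) ++ [(0 : Fin (m + 1))] := by
  apply List.ext_getElem
  · simp
  · intro i h1 h2
    have h1' : i < m + 1 := by simpa using h1
    simp only [List.getElem_map, List.getElem_finRange]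
    apply Fin.val_injective
    rcases Nat.lt_or_ge i m with h | h
    · rw [List.getElem_append_left (by simpa using h)]
      simp only [List.getElem_map, List.getElem_finRange, finRotate_succ_apply, Fin.val_add,
        Fin.coe_cast, Fin.val_one', Fin.val_succ]
      rw [Nat.mod_eq_of_lt (by omega : 1 < m + 1), Nat.mod_eq_of_lt (by omega)]
    · have h' : i = m := by omega
      rw [List.getElem_append_right (by simpa using h)]
      simp only [finRotate_succ_apply, Fin.val_add, Fin.coe_cast, Fin.val_one',
        List.length_map, List.length_finRange, h', List.getElem_singleton, Fin.val_zero]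
      rcases Nat.eq_zero_or_pos m with hm | hm
      · subst hm; simp
      · rw [Nat.mod_eq_of_lt (by omega : 1 < m + 1), Nat.mod_self]

theorem word_one (m : ℕ) :
    permGWord (m + 1) 1
      = FreeGroup.of 0 * ((List.finRange m).map fun i => FreeGroup.of (Fin.succ i)).prod := by
  rw [permGWord]
  simp only [Equiv.Perm.one_apply]
  rw [List.finRange_succ, List.map_cons, List.prod_cons, List.map_map]
  rfl

theorem word_rot (m : ℕ) :
    permGWord (m + 1) (finRotate (m + 1))
      = (((List.finRange m).map fun i => FreeGroup.of (Fin.succ i)).prod) * FreeGroup.of 0 := by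
  rw [permGWord]
  have h : (List.finRange (m + 1)).map (fun i => FreeGroup.of ((finRotate (m + 1)) i))
      = ((List.finRange (m + 1)).map (finRotate (m + 1))).map FreeGroup.of := by
    rw [List.map_map]; rfl
  rw [h, rot_list, List.map_append, List.prod_append, List.map_map]
  simp [Function.comp_def]

theorem finRotate_pow_zero (m : ℕ) : ∀ k, (hk : k < m + 1) →
    ((finRotate (m + 1)) ^ k) 0 = ⟨k, hk⟩
  | 0, _ => by simp [Fin.ext_iff]
  | (k + 1), hk => by
      rw [pow_succ', Equiv.Perm.mul_apply, finRotate_pow_zero m k (by omega)]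
      exact finRotate_of_lt (by omega)

theorem prod_mul_comm {G ι : Type*} [Group G] (x c : ι → G)
    (hc : ∀ i g, Commute (c i) g) : ∀ l : List ι,
    (l.map fun i => x i * c i).prod = (l.map x).prod * (l.map c).prod
  | [] => by simp
  | a :: l => by
    simp only [List.map_cons, List.prod_cons, prod_mul_comm x c hc l]
    rw [mul_assoc, ← mul_assoc (c a), (hc a ((l.map x).prod)).eq, mul_assoc, ← mul_assoc]

end GnHAux

namespace GnHAux

open PresentedGroup Multiplicative

section Main

variable (m : ℕ) (H : Subgroup (Equiv.Perm (Fin (m + 1))))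

/-- The relator set of `G_n(H)`. -/
def R0 : Set (FreeGroup (Fin (m + 1))) :=
  {w | ∃ τ ∈ H, w = permGWord (m + 1) 1 * (permGWord (m + 1) τ)⁻¹}

/-- The relator set of `F`. -/
def R1 : Set (FreeGroup (Fin (m + 1))) :=
  {permGWord (m + 1) 1} ∪ {w | ∃ τ ∈ H, w = permGWord (m + 1) τ}

/-- The central element `z = a_1 ⋯ a_n` of `G_n(H)`. -/
def z : PresentedGroup (R0 m H) := PresentedGroup.mk _ (permGWord (m + 1) 1)

theorem mk_eq_z {τ : Equiv.Perm (Fin (m + 1))} (hτ : τ ∈ H) :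
    PresentedGroup.mk (R0 m H) (permGWord (m + 1) τ) = z m H := by
  have hmem : permGWord (m + 1) 1 * (permGWord (m + 1) τ)⁻¹
      ∈ Subgroup.normalClosure (R0 m H) :=
    Subgroup.subset_normalClosure ⟨τ, hτ, rfl⟩
  have h1 : PresentedGroup.mk (R0 m H) (permGWord (m + 1) 1)
      * (PresentedGroup.mk (R0 m H) (permGWord (m + 1) τ))⁻¹ = 1 := by
    rw [← map_inv, ← map_mul]
    exact (QuotientGroup.eq_one_iff _).mpr hmem
  exact (mul_inv_eq_one.mp h1).symm

theorem mkF_eq_one {τ : Equiv.Perm (Fin (m + 1))} (hτ : τ ∈ H) :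
    PresentedGroup.mk (R1 m H) (permGWord (m + 1) τ) = 1 :=
  (QuotientGroup.eq_one_iff _).mpr
    (Subgroup.subset_normalClosure (Or.inr ⟨τ, hτ, rfl⟩))

theorem mkF_one : PresentedGroup.mk (R1 m H) (permGWord (m + 1) 1) = 1 :=
  (QuotientGroup.eq_one_iff _).mpr
    (Subgroup.subset_normalClosure (Or.inl rfl))

theorem z_def : z m H = PresentedGroup.mk (R0 m H) (permGWord (m + 1) 1) := rfl

variable (hH : Subgroup.zpowers (finRotate (m + 1)) ≤ H)

include hH

theorem rot_mem : finRotate (m + 1) ∈ H := hH (Subgroup.mem_zpowers _)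

omit hH in
theorem lift_rot (σ : Equiv.Perm (Fin (m + 1))) :
    FreeGroup.lift (fun i => (PresentedGroup.of (finRotate (m + 1) i) :
        PresentedGroup (R0 m H))) (permGWord (m + 1) σ)
      = PresentedGroup.mk (R0 m H) (permGWord (m + 1) (finRotate (m + 1) * σ)) := by
  rw [lift_permGWord, mk_permGWord]
  rfl

theorem hθ : ∀ r ∈ R0 m H,
    FreeGroup.lift (fun i => (PresentedGroup.of (finRotate (m + 1) i) :
      PresentedGroup (R0 m H))) r = 1 := by
  rintro r ⟨τ, hτ, rfl⟩
  rw [map_mul, map_inv, lift_rot m H, lift_rot m H, mul_one,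
    mk_eq_z m H (rot_mem m H hH), mk_eq_z m H (H.mul_mem (rot_mem m H hH) hτ)]
  exact mul_inv_cancel _

/-- The shift endomorphism of `G_n(H)`. -/
def θ : PresentedGroup (R0 m H) →* PresentedGroup (R0 m H) :=
  PresentedGroup.toGroup (hθ m H hH)

theorem θ_mk (w : FreeGroup (Fin (m + 1))) :
    θ m H hH (PresentedGroup.mk _ w)
      = FreeGroup.lift (fun i => (PresentedGroup.of (finRotate (m + 1) i) :
          PresentedGroup (R0 m H))) w := rfl

theorem θ_z : θ m H hH (z m H) = z m H := by
  rw [z_def, θ_mk m H hH, lift_rot m H, mul_one, mk_eq_z m H (rot_mem m H hH)]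
  exact z_def m H

theorem θ_of (i : Fin (m + 1)) :
    θ m H hH (PresentedGroup.of i) = PresentedGroup.of (finRotate (m + 1) i) :=
  PresentedGroup.toGroup.of _

theorem comm_of_zero : Commute (z m H) (PresentedGroup.of (0 : Fin (m + 1))) := by
  have h1 : z m H = PresentedGroup.of (0 : Fin (m + 1))
      * PresentedGroup.mk (R0 m H) (((List.finRange m).map fun i =>
          FreeGroup.of (Fin.succ i)).prod) := by
    rw [z_def, word_one, map_mul]; rfl
  have h2 : z m H = PresentedGroup.mk (R0 m H) (((List.finRange m).map fun i =>
      FreeGroup.of (Fin.succ i)).prod) * PresentedGroup.of (0 : Fin (m + 1)) := by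
    rw [← mk_eq_z m H (rot_mem m H hH), word_rot, map_mul]; rfl
  show z m H * _ = _ * z m H
  conv_lhs => rw [h1]
  conv_rhs => rw [h2]
  rw [mul_assoc]

theorem comm_of (i : Fin (m + 1)) : Commute (z m H) (PresentedGroup.of i) := by
  have key : ∀ k : ℕ, Commute (z m H)
      (PresentedGroup.of (((finRotate (m + 1)) ^ k) (0 : Fin (m + 1)))) := by
    intro k
    induction k with
    | zero => simpa using comm_of_zero m H hH
    | succ k ih =>
      have h := ih.map (θ m H hH)
      rw [θ_z m H hH, θ_of m H hH] at h
      rwa [pow_succ', Equiv.Perm.mul_apply]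
  have h := key i.val
  rwa [finRotate_pow_zero m i.val i.isLt, Fin.eta] at h

theorem central (g : PresentedGroup (R0 m H)) : Commute (z m H) g := by
  induction g with
  | _ w =>
    induction w using FreeGroup.induction_on with
    | C1 => simp only [map_one]; exact Commute.one_right (z m H)
    | of x => exact comm_of m H hH x
    | inv_of x hx => rw [map_inv]; exact hx.inv_right
    | mul x y hx hy => rw [map_mul]; exact hx.mul_right hy

end Main

end GnHAux

namespace GnHAux

open PresentedGroup Multiplicative

section Main2

variable (m : ℕ) (H : Subgroup (Equiv.Perm (Fin (m + 1))))

/-- The exponent-count letter map. -/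
def mword (i : Fin (m + 1)) : Multiplicative ℤ :=
  if i = 0 then Multiplicative.ofAdd 1 else 1

theorem mprod (σ : Equiv.Perm (Fin (m + 1))) :
    ((List.finRange (m + 1)).map fun i => mword m (σ i)).prod = Multiplicative.ofAdd 1 := by
  rw [← Fin.prod_univ_def, Equiv.prod_comp σ (mword m)]
  simp [mword]

theorem mprod_inv (σ : Equiv.Perm (Fin (m + 1))) :
    ((List.finRange (m + 1)).map fun i => (mword m (σ i))⁻¹).prod
      = (Multiplicative.ofAdd 1)⁻¹ := by
  rw [← Fin.prod_univ_def, Finset.prod_inv_distrib, Fin.prod_univ_def]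
  exact congrArg _ (mprod m σ)

theorem hχ : ∀ r ∈ R0 m H, FreeGroup.lift (fun i => mword m i) r = 1 := by
  rintro r ⟨τ, hτ, rfl⟩
  rw [map_mul, map_inv, lift_permGWord, lift_permGWord, mprod, mprod, mul_inv_cancel]

/-- The exponent-sum homomorphism `χ : G → ℤ`. -/
def χ : PresentedGroup (R0 m H) →* Multiplicative ℤ := PresentedGroup.toGroup (hχ m H)

theorem χ_mk (w : FreeGroup (Fin (m + 1))) :
    χ m H (PresentedGroup.mk _ w) = FreeGroup.lift (fun i => mword m i) w := rfl

theorem χ_z : χ m H (z m H) = Multiplicative.ofAdd 1 := by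
  rw [z_def, χ_mk, lift_permGWord]
  exact mprod m 1

theorem hπ : ∀ r ∈ R0 m H,
    FreeGroup.lift (fun i => (PresentedGroup.of i : PresentedGroup (R1 m H))) r = 1 := by
  have e : ∀ σ : Equiv.Perm (Fin (m + 1)),
      FreeGroup.lift (fun i => (PresentedGroup.of i : PresentedGroup (R1 m H)))
        (permGWord (m + 1) σ) = PresentedGroup.mk (R1 m H) (permGWord (m + 1) σ) := by
    intro σ; rw [lift_permGWord, mk_permGWord]
  rintro r ⟨τ, hτ, rfl⟩
  rw [map_mul, map_inv, e, e, mkF_one, mkF_eq_one m H hτ]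
  simp

/-- The projection `π : G → F`. -/
def π : PresentedGroup (R0 m H) →* PresentedGroup (R1 m H) := PresentedGroup.toGroup (hπ m H)

theorem π_mk (w : FreeGroup (Fin (m + 1))) :
    π m H (PresentedGroup.mk _ w)
      = FreeGroup.lift (fun i => (PresentedGroup.of i : PresentedGroup (R1 m H))) w := rfl

theorem π_z : π m H (z m H) = 1 := by
  rw [z_def, π_mk, lift_permGWord, ← mk_permGWord, mkF_one]

/-- The forward map `φ : G → F × ℤ`. -/
def φ : PresentedGroup (R0 m H) →* PresentedGroup (R1 m H) × Multiplicative ℤ :=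
  (π m H).prod (χ m H)

theorem φ_of (i : Fin (m + 1)) :
    φ m H (PresentedGroup.of i) = (PresentedGroup.of i, mword m i) := by
  simp only [φ, MonoidHom.prod_apply, π, χ, PresentedGroup.toGroup.of]

theorem φ_z : φ m H (z m H) = (1, Multiplicative.ofAdd 1) := by
  simp only [φ, MonoidHom.prod_apply, π_z, χ_z]

variable (hH : Subgroup.zpowers (finRotate (m + 1)) ≤ H)

include hH

theorem c_comm (x : Multiplicative ℤ) (g : PresentedGroup (R0 m H)) :
    Commute (zpowersHom _ (z m H) x) g := by
  rw [zpowersHom_apply]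
  exact (central m H hH g).zpow_left x.toAdd

theorem key_lift (σ : Equiv.Perm (Fin (m + 1))) :
    FreeGroup.lift (fun i => (PresentedGroup.of i : PresentedGroup (R0 m H))
        * (zpowersHom _ (z m H) (mword m i))⁻¹) (permGWord (m + 1) σ)
      = PresentedGroup.mk (R0 m H) (permGWord (m + 1) σ) * (z m H)⁻¹ := by
  rw [lift_permGWord,
    prod_mul_comm (fun i => (PresentedGroup.of (σ i) : PresentedGroup (R0 m H)))
      (fun i => (zpowersHom _ (z m H) (mword m (σ i)))⁻¹)
      (fun i g => (c_comm m H hH (mword m (σ i)) g).inv_left) (List.finRange (m + 1))]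
  congr 1
  · rw [mk_permGWord]
  · have h1 : (fun i => ((zpowersHom _ (z m H)) (mword m (σ i)))⁻¹)
        = fun i => (zpowersHom _ (z m H)) ((mword m (σ i))⁻¹) :=
      funext fun i => (map_inv _ _).symm
    have h2 : (List.finRange (m + 1)).map
          (fun i => (zpowersHom _ (z m H)) ((mword m (σ i))⁻¹))
        = ((List.finRange (m + 1)).map (fun i => (mword m (σ i))⁻¹)).map
            (zpowersHom _ (z m H)) := by
      rw [List.map_map]; rfl
    rw [h1, h2, ← map_list_prod, mprod_inv]
    simp [zpowersHom_apply]

theorem hψ : ∀ r ∈ R1 m H,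
    FreeGroup.lift (fun i => (PresentedGroup.of i : PresentedGroup (R0 m H))
      * (zpowersHom _ (z m H) (mword m i))⁻¹) r = 1 := by
  rintro r (rfl | ⟨τ, hτ, rfl⟩)
  · rw [key_lift m H hH 1, ← z_def, mul_inv_cancel]
  · rw [key_lift m H hH τ, mk_eq_z m H hτ, mul_inv_cancel]

/-- The backward map on the `F` factor. -/
def ψF : PresentedGroup (R1 m H) →* PresentedGroup (R0 m H) :=
  PresentedGroup.toGroup (hψ m H hH)

/-- The backward map `ψ : F × ℤ → G`. -/
def ψ : PresentedGroup (R1 m H) × Multiplicative ℤ →* PresentedGroup (R0 m H) :=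
  MonoidHom.noncommCoprod (ψF m H hH) (zpowersHom _ (z m H))
    (fun x y => (c_comm m H hH y (ψF m H hH x)).symm)

theorem comp1 : (ψ m H hH).comp (φ m H) = MonoidHom.id _ := by
  ext i
  rw [MonoidHom.comp_apply, MonoidHom.id_apply, φ_of]
  simp only [ψ, MonoidHom.noncommCoprod_apply, ψF, PresentedGroup.toGroup.of]
  exact inv_mul_cancel_right _ _

theorem comp2 : (φ m H).comp (ψ m H hH) = MonoidHom.id _ := by
  have hβ : ∀ y : Multiplicative ℤ,
      φ m H (zpowersHom _ (z m H) y) = (1, y) := by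
    have h : (φ m H).comp (zpowersHom _ (z m H))
        = MonoidHom.inr (PresentedGroup (R1 m H)) (Multiplicative ℤ) := by
      apply MonoidHom.ext_mint
      rw [MonoidHom.comp_apply, zpowersHom_apply, toAdd_ofAdd, zpow_one, MonoidHom.inr_apply]
      rw [φ_z]
    intro y
    simpa using DFunLike.congr_fun h y
  have hF : ∀ x, (φ m H) ((ψF m H hH) x) = (x, 1) := by
    have h : (φ m H).comp (ψF m H hH)
        = MonoidHom.inl (PresentedGroup (R1 m H)) (Multiplicative ℤ) := by
      apply PresentedGroup.ext
      intro i
      rw [MonoidHom.comp_apply, MonoidHom.inl_apply]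
      have ho : ψF m H hH (PresentedGroup.of i)
          = PresentedGroup.of i * (zpowersHom _ (z m H) (mword m i))⁻¹ :=
        PresentedGroup.toGroup.of _
      rw [ho, map_mul, map_inv, φ_of, hβ (mword m i), Prod.inv_mk, Prod.mk_mul_mk]
      simp
    intro x
    simpa using DFunLike.congr_fun h x
  apply MonoidHom.ext
  rintro ⟨x, y⟩
  rw [MonoidHom.comp_apply, MonoidHom.id_apply]
  have hxy : ψ m H hH (x, y) = ψF m H hH x * zpowersHom _ (z m H) y := rfl
  rw [hxy, map_mul, hF x, hβ y, Prod.mk_mul_mk, one_mul, mul_one]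

end Main2

end GnHAux


/-- for a subgroup `H` of `Sym_n` containing the cyclic subgroup `H₀`
generated by the `n`-cycle `(1,2,…,n)` (i.e. `finRotate n`), the group `G_n(H)` presented
by `a_1, …, a_n` with relations `a_1 ⋯ a_n = a_{τ(1)} ⋯ a_{τ(n)}` for all `τ ∈ H` is
isomorphic to `F × ℤ`, where `F` is the group presented by `x_1, …, x_n` with relations
`x_1 ⋯ x_n = 1` and `x_{τ(1)} ⋯ x_{τ(n)} = 1` for all `τ ∈ H`. -/
theorem GnH_iso (n : ℕ) (hn : 3 ≤ n) (H : Subgroup (Equiv.Perm (Fin n)))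
    (hH : Subgroup.zpowers (finRotate n) ≤ H) :
    Nonempty
      (PresentedGroup {w : FreeGroup (Fin n) | ∃ τ ∈ H, w = permGWord n 1 * (permGWord n τ)⁻¹} ≃*
        PresentedGroup ({permGWord n 1} ∪ {w : FreeGroup (Fin n) | ∃ τ ∈ H, w = permGWord n τ}) ×
          Multiplicative ℤ) := by
  obtain ⟨m, rfl⟩ : ∃ m, n = m + 1 := ⟨n - 1, by omega⟩
  exact ⟨MonoidHom.toMulEquiv (GnHAux.φ m H) (GnHAux.ψ m H hH)
    (GnHAux.comp1 m H hH) (GnHAux.comp2 m H hH)⟩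
end
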